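/- arXiv:2212.01118 — 8 statements merged into one kernel-verified Lean document; each statement's English description precedes it below -/
import Mathlib

section
/- For a closed set S ⊆ ℝ^d, a point p ∈ S, and a nonzero vector v ∈ ℝ^d, if for some λ > 0 the set of closest points π_S(p + λv) is not exactly {p}, then for all λ' ≥ λ the set π_S(p + λ'v) is not exactly {p}, and for all λ' > λ the point p is not contained in π_S(p + λ'v). -/
open Metric Set

noncomputable def proj {d : ℕ} (S : Set (EuclideanSpace ℝ (Fin d)))
    (x : EuclideanSpace ℝ (Fin d)) : Set (EuclideanSpace ℝ (Fin d)) :=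
  {q ∈ S | dist x q = Metric.infDist x S}

lemma ray_rep {E : Type*} [NormedAddCommGroup E] [NormedSpace ℝ E]
    {x y q : E} (hyx : y ≠ x) (hw : Wbtw ℝ x y q) :
    q = x + (dist x q / dist x y) • (y - x) := by
  rw [← mem_segment_iff_wbtw] at hw
  obtain ⟨a, b, ha, hb, hab, hy⟩ := hw
  have hyx' : y - x = b • (q - x) := by
    have : a = 1 - b := by linarith
    rw [← hy]; rw [this]; module
  have hb0 : b ≠ 0 := by
    rintro rfl
    apply hyx
    simpa [sub_eq_zero] using hyx'
  have hqx : q - x ≠ 0 := by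
    rintro h0
    apply hyx
    rw [h0, smul_zero] at hyx'
    simpa [sub_eq_zero] using hyx'
  have hdxy : dist x y = b * dist x q := by
    rw [dist_eq_norm', dist_eq_norm', hyx', norm_smul, Real.norm_eq_abs, abs_of_nonneg hb]
  have hq0 : dist x q ≠ 0 := fun h => hqx (by rwa [dist_eq_norm', norm_eq_zero] at h)
  have : dist x q / dist x y = b⁻¹ := by
    rw [hdxy]; field_simp
  rw [this, hyx', smul_smul, inv_mul_cancel₀ hb0, one_smul]
  abel

lemma proj_seg {d : ℕ} {S : Set (EuclideanSpace ℝ (Fin d))} (hne : S.Nonempty)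
    {x p : EuclideanSpace ℝ (Fin d)} (hp : p ∈ S) (hd : dist x p = infDist x S)
    {y : EuclideanSpace ℝ (Fin d)} (hw : Wbtw ℝ x y p) (hyx : y ≠ x) :
    proj S y = {p} := by
  have hsum : dist x y + dist y p = dist x p := hw.dist_add_dist
  have hinf : infDist y S = dist y p := by
    refine le_antisymm (infDist_le_dist_of_mem hp) (le_of_not_gt fun hlt => ?_)
    obtain ⟨q, hq, hqlt⟩ := (infDist_lt_iff hne).mp hlt
    have h1 : dist x p ≤ dist x q := hd ▸ infDist_le_dist_of_mem hq
    have h2 : dist x q ≤ dist x y + dist y q := dist_triangle _ _ _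
    linarith
  ext q
  simp only [proj, mem_setOf_eq, mem_singleton_iff]
  constructor
  · rintro ⟨hqS, hqd⟩
    have hdyq : dist y q = dist y p := hqd.trans hinf
    have h1 : dist x p ≤ dist x q := hd ▸ infDist_le_dist_of_mem hqS
    have h2 : dist x q ≤ dist x y + dist y q := dist_triangle _ _ _
    have hxq : dist x q = dist x p := by linarith
    have hwq : Wbtw ℝ x y q := by
      rw [← dist_add_dist_eq_iff]; linarith
    rw [ray_rep hyx hwq, ray_rep hyx hw, hxq]
  · rintro rfl
    exact ⟨hp, hinf.symm ▸ rfl⟩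

theorem stmt0 {d : ℕ} (S : Set (EuclideanSpace ℝ (Fin d))) (hS : IsClosed S)
    (hne : S.Nonempty) (p : EuclideanSpace ℝ (Fin d)) (hp : p ∈ S)
    (v : EuclideanSpace ℝ (Fin d)) (hv : v ≠ 0) (lam : ℝ) (hlam : 0 < lam)
    (h : proj S (p + lam • v) ≠ {p}) :
    (∀ lam' : ℝ, lam ≤ lam' → proj S (p + lam' • v) ≠ {p}) ∧
    (∀ lam' : ℝ, lam < lam' → p ∉ proj S (p + lam' • v)) := by
  have key : ∀ lam' : ℝ, lam < lam' → p ∉ proj S (p + lam' • v) := by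
    intro lam' hlt hmem
    apply h
    obtain ⟨-, hd⟩ := hmem
    set x := p + lam' • v with hx
    set y := p + lam • v with hy
    have hnv : ‖v‖ ≠ 0 := norm_ne_zero_iff.mpr hv
    have hdxy : dist x y = (lam' - lam) * ‖v‖ := by
      rw [dist_eq_norm]
      have : x - y = (lam' - lam) • v := by rw [hx, hy]; module
      rw [this, norm_smul, Real.norm_eq_abs, abs_of_pos (by linarith)]
    have hdyp : dist y p = lam * ‖v‖ := by
      rw [dist_eq_norm]
      have : y - p = lam • v := by rw [hy]; module
      rw [this, norm_smul, Real.norm_eq_abs, abs_of_pos hlam]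
    have hdxp : dist x p = lam' * ‖v‖ := by
      rw [dist_eq_norm]
      have : x - p = lam' • v := by rw [hx]; module
      rw [this, norm_smul, Real.norm_eq_abs, abs_of_pos (by linarith)]
    have hw : Wbtw ℝ x y p := by
      rw [← dist_add_dist_eq_iff, hdxy, hdyp, hdxp]; ring
    have hyx : y ≠ x := by
      intro h0
      have : dist x y = 0 := by rw [h0, dist_self]
      rw [hdxy] at this
      have := mul_eq_zero.mp this
      rcases this with h1 | h1
      · linarith
      · exact hnv h1
    exact proj_seg hne hp hd hw hyx
  refine ⟨?_, key⟩
  intro lam' hle heq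
  rcases eq_or_lt_of_le hle with rfl | hlt
  · exact h heq
  · exact key lam' hlt (heq ▸ rfl)
end

section
/- Let S ⊆ ℝ^d be closed, p ∈ S, and u a unit vector with positive and finite projection range d(p,u,π_S) := sup{λ ∈ ℝ : π_S(p + λu) = {p}}. Then the pair (p,u) belongs to the generalized normal bundle, i.e., u ∈ Nor(p,S): for every w ∈ Tan(p,S), ⟨u, w⟩ ≤ 0. -/
open Metric Set
open scoped RealInnerProductSpace

def Tan {d : ℕ} (p : EuclideanSpace ℝ (Fin d)) (S : Set (EuclideanSpace ℝ (Fin d))) :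
    Set (EuclideanSpace ℝ (Fin d)) :=
  {u | u = 0 ∨ (u ≠ 0 ∧ ∀ ε > (0 : ℝ), ∃ q ∈ S, 0 < ‖q - p‖ ∧ ‖q - p‖ < ε ∧
      ‖‖q - p‖⁻¹ • (q - p) - ‖u‖⁻¹ • u‖ < ε)}

theorem stmt3 {d : ℕ} (S : Set (EuclideanSpace ℝ (Fin d))) (hS : IsClosed S)
    (p : EuclideanSpace ℝ (Fin d)) (hp : p ∈ S)
    (u : EuclideanSpace ℝ (Fin d)) (hu : ‖u‖ = 1)
    (hBdd : BddAbove {l : ℝ | proj S (p + l • u) = {p}})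
    (hpos : 0 < sSup {l : ℝ | proj S (p + l • u) = {p}}) :
    ∀ w ∈ Tan p S, ⟪u, w⟫ ≤ 0 := by
  intro w hw
  rcases hw with h0 | ⟨hw0, hw⟩
  · simp [h0]
  set L := {l : ℝ | proj S (p + l • u) = {p}} with hLdef
  have hne : L.Nonempty := by
    by_contra h
    rw [Set.not_nonempty_iff_eq_empty] at h
    rw [h, Real.sSup_empty] at hpos
    exact lt_irrefl 0 hpos
  obtain ⟨l, hlL, hl0⟩ : ∃ l ∈ L, 0 < l := by
    by_contra h
    push_neg at h
    exact absurd (csSup_le hne fun l hl => h l hl) (not_le.2 hpos)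
  have key : ∀ q ∈ S, ⟪u, q - p⟫ ≤ ‖q - p‖ ^ 2 / (2 * l) := by
    intro q hq
    have hpproj : p ∈ proj S (p + l • u) := by rw [hlL]; exact rfl
    have hdp : dist (p + l • u) p = Metric.infDist (p + l • u) S := hpproj.2
    have hle : dist (p + l • u) p ≤ dist (p + l • u) q := by
      rw [hdp]; exact Metric.infDist_le_dist_of_mem hq
    have hdpp : dist (p + l • u) p = l := by
      rw [dist_eq_norm]
      simp [norm_smul, hu, abs_of_pos hl0]
    have hdq : dist (p + l • u) q = ‖(p - q) + l • u‖ := by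
      rw [dist_eq_norm]
      congr 1
      abel
    have hsq : l ^ 2 ≤ ‖(p - q) + l • u‖ ^ 2 := by
      have h1 : l ≤ ‖(p - q) + l • u‖ := by rw [← hdq]; linarith [hle, hdpp]
      nlinarith [norm_nonneg ((p - q) + l • u)]
    have hexp : ‖(p - q) + l • u‖ ^ 2
        = ‖p - q‖ ^ 2 + 2 * (l * ⟪p - q, u⟫) + l ^ 2 := by
      rw [@norm_add_sq_real]
      rw [real_inner_smul_right]
      rw [norm_smul]
      rw [Real.norm_eq_abs, abs_of_pos hl0, hu]
      ring
    have h2 : 0 ≤ ‖p - q‖ ^ 2 + 2 * (l * ⟪p - q, u⟫) := by nlinarith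
    have hnorm : ‖p - q‖ = ‖q - p‖ := norm_sub_rev _ _
    have hinner : ⟪u, q - p⟫ = -⟪p - q, u⟫ := by
      rw [real_inner_comm]
      rw [show q - p = -(p - q) by abel, inner_neg_left]
    rw [hinner, le_div_iff₀ (by positivity), ← hnorm]
    nlinarith
  -- reduce to unit vector v
  set v := ‖w‖⁻¹ • w with hv
  have hwpos : (0 : ℝ) < ‖w‖ := norm_pos_iff.2 hw0
  have hv0 : ⟪u, v⟫ ≤ 0 := by
    apply le_of_forall_pos_le_add
    intro ε' hε'
    set ε := min (ε' / 2) (ε' * l) with hεdef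
    have hε : 0 < ε := lt_min (by linarith) (by positivity)
    obtain ⟨q, hqS, hq1, hq2, hq3⟩ := hw ε hε
    have hd1 : ⟪u, ‖q - p‖⁻¹ • (q - p)⟫ ≤ ‖q - p‖ / (2 * l) := by
      rw [real_inner_smul_right]
      have := key q hqS
      calc ‖q - p‖⁻¹ * ⟪u, q - p⟫ ≤ ‖q - p‖⁻¹ * (‖q - p‖ ^ 2 / (2 * l)) := by
            apply mul_le_mul_of_nonneg_left this (by positivity)
        _ = ‖q - p‖ / (2 * l) := by
            field_simp
    have hd2 : ⟪u, v - ‖q - p‖⁻¹ • (q - p)⟫ ≤ ε := by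
      calc ⟪u, v - ‖q - p‖⁻¹ • (q - p)⟫ ≤ ‖u‖ * ‖v - ‖q - p‖⁻¹ • (q - p)‖ :=
            real_inner_le_norm _ _
        _ = ‖‖q - p‖⁻¹ • (q - p) - ‖w‖⁻¹ • w‖ := by rw [hu, one_mul, hv, norm_sub_rev]
        _ ≤ ε := le_of_lt hq3
    have hsplit : ⟪u, v⟫ = ⟪u, ‖q - p‖⁻¹ • (q - p)⟫ + ⟪u, v - ‖q - p‖⁻¹ • (q - p)⟫ := by
      rw [← inner_add_right]
      congr 1
      abel
    have h1 : ‖q - p‖ / (2 * l) ≤ ε' / 2 := by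
      have : ‖q - p‖ < ε' * l := lt_of_lt_of_le hq2 (min_le_right _ _)
      rw [div_le_iff₀ (by positivity)]
      nlinarith
    have h2 : ε ≤ ε' / 2 := min_le_left _ _
    rw [hsplit]
    linarith
  have : ⟪u, w⟫ = ‖w‖ * ⟪u, v⟫ := by
    rw [hv, real_inner_smul_right]
    field_simp
  rw [this]
  exact mul_nonpos_of_nonneg_of_nonpos (le_of_lt hwpos) hv0
end

section
/- Let S ⊆ ℝ^d be closed, and let x be a point of the medial axis ax(S) = {x : #π_S(x) > 1}. Then for each p ∈ π_S(x), setting λ = |x - p| > 0 and u = (x - p)/λ, the projection range satisfies d(p,u,π_S) = λ; in particular the ball B(x, λ) is a maximal empty weakly tangent ball to S at p. -/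
open Metric Set

def medialAxis {d : ℕ} (S : Set (EuclideanSpace ℝ (Fin d))) :
    Set (EuclideanSpace ℝ (Fin d)) :=
  {x | (proj S x).Nontrivial}

theorem stmt6 {d : ℕ} (S : Set (EuclideanSpace ℝ (Fin d))) (hS : IsClosed S)
    (hne : S.Nonempty) (x : EuclideanSpace ℝ (Fin d)) (hxS : x ∉ S)
    (hx : x ∈ medialAxis S) (p : EuclideanSpace ℝ (Fin d)) (hp : p ∈ proj S x) :
    0 < dist x p ∧
    BddAbove {μ : ℝ | proj S (p + μ • ((dist x p)⁻¹ • (x - p))) = {p}} ∧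
    sSup {μ : ℝ | proj S (p + μ • ((dist x p)⁻¹ • (x - p))) = {p}} = dist x p := by
  obtain ⟨hpS, hpd⟩ := hp
  have hxp : x ≠ p := fun h => hxS (h ▸ hpS)
  have hl : 0 < dist x p := dist_pos.mpr hxp
  set l := dist x p with hldef
  set u : EuclideanSpace ℝ (Fin d) := l⁻¹ • (x - p) with hu
  have hun : ‖u‖ = 1 := by
    rw [hu, norm_smul, norm_inv, Real.norm_eq_abs, abs_of_pos hl, ← dist_eq_norm x p,
      ← hldef, inv_mul_cancel₀ hl.ne']
  have hnu : ∀ μ : ℝ, ‖μ • u‖ = |μ| := by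
    intro μ; rw [norm_smul, hun, Real.norm_eq_abs, mul_one]
  have hxeq : p + l • u = x := by
    rw [hu, smul_smul, mul_inv_cancel₀ hl.ne', one_smul]
    abel
  obtain ⟨q, hq, hqp⟩ := hx.exists_ne p
  have hqS : q ∈ S := hq.1
  have hqd : dist x q = l := hq.2.trans hpd.symm
  set M := {μ : ℝ | proj S (p + μ • u) = {p}} with hM
  -- upper bound: every μ in M satisfies μ < l
  have hub : ∀ μ ∈ M, μ < l := by
    intro μ hμ
    by_contra h
    push_neg at h
    set y := p + μ • u with hy
    have hpy : p ∈ proj S y := by rw [hμ]; rfl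
    have hyp : dist y p = μ := by
      rw [hy, dist_eq_norm, add_sub_cancel_left, hnu, abs_of_nonneg (hl.le.trans h)]
    have hyx : dist y x = μ - l := by
      rw [← hxeq, hy, dist_eq_norm]
      have : p + μ • u - (p + l • u) = (μ - l) • u := by rw [sub_smul]; abel
      rw [this, hnu, abs_of_nonneg (by linarith)]
    have hinf : infDist y S = μ := hpy.2.symm.trans hyp
    have hqle : dist y q ≤ μ := by
      calc dist y q ≤ dist y x + dist x q := dist_triangle y x q
        _ = μ := by rw [hyx, hqd]; ring
    have hqinf : dist y q = infDist y S := by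
      refine le_antisymm (hinf ▸ hqle) (infDist_le_dist_of_mem hqS)
    have : q ∈ proj S y := ⟨hqS, hqinf⟩
    rw [hμ] at this
    exact hqp this
  -- membership: [0, l) ⊆ M
  have hmem : Ico (0 : ℝ) l ⊆ M := by
    rintro μ ⟨hμ0, hμl⟩
    set y := p + μ • u with hy
    have hyp : dist y p = μ := by
      rw [hy, dist_eq_norm, add_sub_cancel_left, hnu, abs_of_nonneg hμ0]
    have hxy : dist x y = l - μ := by
      rw [← hxeq, hy, dist_eq_norm]
      have : p + l • u - (p + μ • u) = (l - μ) • u := by rw [sub_smul]; abel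
      rw [this, hnu, abs_of_nonneg (by linarith)]
    have hlow : ∀ s ∈ S, μ ≤ dist y s := by
      intro s hs
      have h1 : l ≤ dist x s := hpd ▸ infDist_le_dist_of_mem hs
      have h2 : dist x s ≤ dist x y + dist y s := dist_triangle x y s
      linarith [hxy ▸ h2]
    have hinf : infDist y S = μ := by
      refine le_antisymm (hyp ▸ infDist_le_dist_of_mem hpS) ?_
      refine le_of_not_gt fun hcon => ?_
      obtain ⟨s, hs, hds⟩ := (infDist_lt_iff hne).mp hcon
      exact absurd hds (not_lt.mpr (hlow s hs))
    show proj S y = {p}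
    ext s
    simp only [proj, Set.mem_setOf_eq, Set.mem_singleton_iff]
    constructor
    · rintro ⟨hsS, hsd⟩
      have hys : dist y s = μ := hsd.trans hinf
      have hxs : dist x s = l := by
        have h1 : l ≤ dist x s := hpd ▸ infDist_le_dist_of_mem hsS
        have h2 : dist x s ≤ dist x y + dist y s := dist_triangle x y s
        rw [hxy, hys] at h2
        linarith
      -- equality in triangle inequality
      have heq : ‖(x - y) + (y - s)‖ = ‖x - y‖ + ‖y - s‖ := by
        have : x - y + (y - s) = x - s := by abel
        rw [this, ← dist_eq_norm, ← dist_eq_norm, ← dist_eq_norm, hxs, hxy, hys]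
        ring
      have hray : SameRay ℝ (x - y) (y - s) := sameRay_iff_norm_add.mpr heq
      have hnxy : ‖x - y‖ = l - μ := by rw [← dist_eq_norm]; exact hxy
      obtain ⟨r, hr0, hr⟩ := hray.exists_nonneg_left (by
        rw [← norm_pos_iff, hnxy]; linarith)
      have hxyu : x - y = (l - μ) • u := by
        rw [hy, ← hxeq, sub_smul]; abel
      have hys' : y - s = (r * (l - μ)) • u := by
        rw [← hr, hxyu, smul_smul]
      have hnorm : r * (l - μ) = μ := by
        have := hys'
        have h2 : ‖y - s‖ = μ := by rw [← dist_eq_norm, hys]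
        rw [this, hnu] at h2
        rwa [abs_of_nonneg (mul_nonneg hr0 (by linarith))] at h2
      have : y - s = μ • u := by rw [hys', hnorm]
      have : s = p := by
        have hyd : y = p + μ • u := hy
        have : s = y - μ • u := by
          rw [← this]; abel
        rw [this, hyd]; abel
      exact this
    · rintro rfl
      exact ⟨hpS, hyp.trans hinf.symm⟩
  have h0M : (0 : ℝ) ∈ M := hmem ⟨le_refl 0, hl⟩
  have hbdd : BddAbove M := ⟨l, fun μ hμ => (hub μ hμ).le⟩
  refine ⟨hl, hbdd, ?_⟩
  refine le_antisymm (csSup_le ⟨0, h0M⟩ fun μ hμ => (hub μ hμ).le) ?_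
  have : sSup (Ico (0:ℝ) l) ≤ sSup M :=
    csSup_le_csSup hbdd (nonempty_Ico.mpr hl) hmem
  rwa [csSup_Ico hl] at this
end

section
/- Let S ⊆ ℝ^d be closed, p ∈ S, and u a unit vector with 0 < d(p,u,π_S) < ∞. Then the point p + d(p,u,π_S)·u lies in the closure of the medial axis of S. -/
open Metric Set
open scoped RealInnerProductSpace

lemma proj_nonempty {d : ℕ} {S : Set (EuclideanSpace ℝ (Fin d))} (hS : IsClosed S)
    (hne : S.Nonempty) (x : EuclideanSpace ℝ (Fin d)) : (proj S x).Nonempty := by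
  obtain ⟨q, hq, hd⟩ := hS.exists_infDist_eq_dist hne x
  exact ⟨q, hq, hd.symm⟩

lemma proj_self {d : ℕ} {S : Set (EuclideanSpace ℝ (Fin d))}
    {p : EuclideanSpace ℝ (Fin d)} (hp : p ∈ S) : proj S p = {p} := by
  ext q
  constructor
  · rintro ⟨hqS, hq⟩
    rw [infDist_zero_of_mem hp] at hq
    exact mem_singleton_iff.mpr (dist_eq_zero.mp hq).symm
  · intro h
    rw [mem_singleton_iff] at h
    subst h
    exact ⟨hp, by rw [dist_self, infDist_zero_of_mem hp]⟩

lemma proj_segment {d : ℕ} {S : Set (EuclideanSpace ℝ (Fin d))}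
    {q y : EuclideanSpace ℝ (Fin d)} {θ : ℝ}
    (hq : q ∈ proj S y) (h0 : 0 ≤ θ) (h1 : θ ≤ 1) :
    q ∈ proj S (q + θ • (y - q)) := by
  set z := q + θ • (y - q) with hzdef
  have hzq : dist z q = θ * ‖y - q‖ := by
    rw [dist_eq_norm]
    have : z - q = θ • (y - q) := by rw [hzdef]; abel
    rw [this, norm_smul, Real.norm_eq_abs, abs_of_nonneg h0]
  have hyz : dist y z = (1 - θ) * ‖y - q‖ := by
    rw [dist_eq_norm]
    have : y - z = (1 - θ) • (y - q) := by rw [hzdef]; module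
    rw [this, norm_smul, Real.norm_eq_abs, abs_of_nonneg (by linarith)]
  have key : ∀ a ∈ S, dist z q ≤ dist z a := by
    intro a ha
    have h2 : dist y q ≤ dist y a := hq.2 ▸ infDist_le_dist_of_mem ha
    have h3 : dist y a ≤ dist y z + dist z a := dist_triangle _ _ _
    have hyq : dist y q = ‖y - q‖ := dist_eq_norm _ _
    rw [hzq]
    rw [hyq] at h2
    rw [hyz] at h3
    linarith
  refine ⟨hq.1, le_antisymm ?_ (infDist_le_dist_of_mem hq.1)⟩
  by_contra h
  push_neg at h
  obtain ⟨a, haS, ha⟩ := (infDist_lt_iff ⟨q, hq.1⟩).mp h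
  exact absurd ha (not_lt.mpr (key a haS))

lemma proj_segment_subset {d : ℕ} {S : Set (EuclideanSpace ℝ (Fin d))}
    {q y : EuclideanSpace ℝ (Fin d)} {θ : ℝ}
    (hq : q ∈ proj S y) (h0 : 0 ≤ θ) (h1 : θ ≤ 1) :
    proj S (q + θ • (y - q)) ⊆ proj S y := by
  intro a ha
  set z := q + θ • (y - q) with hzdef
  have hseg := proj_segment hq h0 h1
  refine ⟨ha.1, le_antisymm ?_ (infDist_le_dist_of_mem ha.1)⟩
  have hzq : dist z q = θ * ‖y - q‖ := by
    rw [dist_eq_norm]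
    have : z - q = θ • (y - q) := by rw [hzdef]; abel
    rw [this, norm_smul, Real.norm_eq_abs, abs_of_nonneg h0]
  have hyz : dist y z = (1 - θ) * ‖y - q‖ := by
    rw [dist_eq_norm]
    have : y - z = (1 - θ) • (y - q) := by rw [hzdef]; module
    rw [this, norm_smul, Real.norm_eq_abs, abs_of_nonneg (by linarith)]
  have hza : dist z a = θ * ‖y - q‖ := by
    rw [ha.2, ← hseg.2]
    exact hzq
  have h3 : dist y a ≤ dist y z + dist z a := dist_triangle _ _ _
  have hyq : infDist y S = ‖y - q‖ := by rw [← hq.2, dist_eq_norm]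
  rw [hyq]
  rw [hyz, hza] at h3
  linarith

set_option maxHeartbeats 1000000 in
theorem stmt7 {d : ℕ} (S : Set (EuclideanSpace ℝ (Fin d))) (hS : IsClosed S)
    (hne : S.Nonempty) (p : EuclideanSpace ℝ (Fin d)) (hp : p ∈ S)
    (u : EuclideanSpace ℝ (Fin d)) (hu : ‖u‖ = 1)
    (hBdd : BddAbove {l : ℝ | proj S (p + l • u) = {p}})
    (hpos : 0 < sSup {l : ℝ | proj S (p + l • u) = {p}}) :
    p + sSup {l : ℝ | proj S (p + l • u) = {p}} • u ∈ closure (medialAxis S) := by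
  set L := {l : ℝ | proj S (p + l • u) = {p}} with hLdef
  set r := sSup L with hrdef
  have h0L : (0:ℝ) ∈ L := by
    show proj S (p + (0:ℝ) • u) = {p}
    rw [zero_smul, add_zero]
    exact proj_self hp
  have hIntL : ∀ s : ℝ, 0 ≤ s → s < r → proj S (p + s • u) = {p} := by
    intro s hs0 hsr
    obtain ⟨l, hlL, hsl⟩ := exists_lt_of_lt_csSup ⟨0, h0L⟩ hsr
    have hl0 : 0 < l := lt_of_le_of_lt hs0 hsl
    have hpy : p ∈ proj S (p + l • u) := by
      have : proj S (p + l • u) = {p} := hlL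
      rw [this]; exact mem_singleton _
    have hθ0 : 0 ≤ s / l := div_nonneg hs0 hl0.le
    have hθ1 : s / l ≤ 1 := (div_le_one hl0).mpr hsl.le
    have hz : p + (s/l) • ((p + l • u) - p) = p + s • u := by
      rw [add_sub_cancel_left, smul_smul, div_mul_cancel₀ _ hl0.ne']
    have hsub2 := proj_segment_subset hpy hθ0 hθ1
    have hmem := proj_segment hpy hθ0 hθ1
    rw [hz] at hsub2 hmem
    have hlL' : proj S (p + l • u) = {p} := hlL
    rw [hlL'] at hsub2
    exact Subset.antisymm hsub2 (singleton_subset_iff.mpr hmem)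
  have hdist : ∀ s : ℝ, 0 ≤ s → s < r → infDist (p + s • u) S = s := by
    intro s hs0 hsr
    have hpz : p ∈ proj S (p + s • u) := by rw [hIntL s hs0 hsr]; exact mem_singleton _
    have hd : dist (p + s • u) p = s := by
      rw [dist_eq_norm, add_sub_cancel_left, norm_smul, hu, Real.norm_eq_abs,
        abs_of_nonneg hs0, mul_one]
    rw [← hpz.2, hd]
  set x := p + r • u with hxdef
  have hdxp : dist x p = r := by
    rw [hxdef, dist_eq_norm, add_sub_cancel_left, norm_smul, hu, Real.norm_eq_abs,
      abs_of_nonneg hpos.le, mul_one]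
  have hxd : infDist x S = r := by
    refine le_antisymm (by rw [← hdxp]; exact infDist_le_dist_of_mem hp) ?_
    by_contra hlt
    push_neg at hlt
    have hnn : 0 ≤ infDist x S := infDist_nonneg
    set s := (infDist x S + 3*r)/4 with hsdef
    have hs0 : 0 ≤ s := by rw [hsdef]; linarith
    have hsr : s < r := by rw [hsdef]; linarith
    have h1 : infDist (p + s • u) S = s := hdist s hs0 hsr
    have h2 : infDist (p + s • u) S ≤ infDist x S + dist (p + s • u) x :=
      infDist_le_infDist_add_dist
    have h3 : dist (p + s • u) x = r - s := by
      rw [dist_eq_norm]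
      have he : (p + s • u) - (p + r • u) = (s - r) • u := by module
      rw [hxdef, he, norm_smul, hu, mul_one, Real.norm_eq_abs, abs_of_nonpos (by linarith)]
      ring
    rw [h1, h3] at h2
    linarith [h2, hlt, hsdef]
  have hpx : p ∈ proj S x := ⟨hp, by rw [hdxp, hxd]⟩
  by_contra hxm
  rw [Metric.mem_closure_iff] at hxm
  push_neg at hxm
  obtain ⟨ε, hε, hsep⟩ := hxm
  set ρ := min (ε/2) (r/2) with hρdef
  have hρ0 : 0 < ρ := lt_min (by linarith) (by linarith)
  have hρr : ρ < r := lt_of_le_of_lt (min_le_right _ _) (by linarith)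
  set K := closedBall x ρ with hKdef
  have hsub : ∀ z ∈ K, (proj S z).Subsingleton := by
    intro z hz
    rw [← not_nontrivial_iff]
    intro hnt
    have hzax : z ∈ medialAxis S := hnt
    have h1 : ε ≤ dist x z := hsep z hzax
    have h2 : dist x z ≤ ρ := by rw [dist_comm]; exact mem_closedBall.mp hz
    have h3 : ρ ≤ ε/2 := min_le_left _ _
    linarith
  have hKc : IsCompact K := isCompact_closedBall x ρ
  obtain ⟨z₀, hz₀K, hmax'⟩ := hKc.exists_isMaxOn ⟨x, mem_closedBall_self hρ0.le⟩
    (continuous_infDist_pt S).continuousOn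
  have hmax : ∀ y ∈ K, infDist y S ≤ infDist z₀ S := fun y hy => hmax' hy
  set M := infDist z₀ S with hMdef
  have hrM : r ≤ M := by rw [← hxd]; exact hmax x (mem_closedBall_self hρ0.le)
  have hMpos : 0 < M := lt_of_lt_of_le hpos hrM
  obtain ⟨q₀, hq₀⟩ := proj_nonempty hS hne z₀
  set b := z₀ - q₀ with hbdef
  have hbM : ‖b‖ = M := by rw [hbdef, ← dist_eq_norm, hq₀.2]
  -- key directional inequality at the maximum point
  have hdir : ∀ w : EuclideanSpace ℝ (Fin d),
      (∃ ε₀ > 0, ∀ t : ℝ, 0 < t → t ≤ ε₀ → z₀ + t • w ∈ K) → ⟪b, w⟫ ≤ 0 := by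
    rintro w ⟨ε₀, hε₀, hin⟩
    by_contra hc
    push_neg at hc
    have hw0 : w ≠ 0 := by rintro rfl; simp at hc
    have hwn : 0 < ‖w‖ := norm_pos_iff.mpr hw0
    set t : ℕ → ℝ := fun k => min ε₀ (1/(k+1)) with htdef
    have ht0 : ∀ k, 0 < t k := fun k => lt_min hε₀ (by positivity)
    have htε : ∀ k, t k ≤ ε₀ := fun k => min_le_left _ _
    have hzkK : ∀ k, z₀ + t k • w ∈ K := fun k => hin _ (ht0 k) (htε k)
    choose qk hqk using fun k => proj_nonempty hS hne (z₀ + t k • w)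
    have key1 : ∀ k, ⟪z₀ - qk k, w⟫ ≤ 0 := by
      intro k
      have h1 : infDist (z₀ + t k • w) S ≤ M := hmax _ (hzkK k)
      have h3 : M ≤ ‖z₀ - qk k‖ := by
        rw [← dist_eq_norm]; exact infDist_le_dist_of_mem (hqk k).1
      have h4 : ‖(z₀ - qk k) + t k • w‖ ≤ M := by
        have he : ‖(z₀ - qk k) + t k • w‖ = dist (z₀ + t k • w) (qk k) := by
          rw [dist_eq_norm]; congr 1; abel
        rw [he, (hqk k).2]; exact h1
      have h5 := norm_add_sq_real (z₀ - qk k) (t k • w)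
      have h6 : ⟪z₀ - qk k, t k • w⟫ = t k * ⟪z₀ - qk k, w⟫ :=
        real_inner_smul_right _ _ _
      have h8 : ‖t k • w‖^2 = (t k)^2 * ‖w‖^2 := by
        rw [norm_smul, Real.norm_eq_abs, mul_pow, sq_abs]
      have h7 : ‖(z₀ - qk k) + t k • w‖^2 ≤ ‖z₀ - qk k‖^2 :=
        pow_le_pow_left₀ (norm_nonneg _) (h4.trans h3) 2
      have h9 : t k * ⟪z₀ - qk k, w⟫ ≤ 0 := by
        linarith [h5, h6, h7, sq_nonneg ‖t k • w‖]
      by_contra hgt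
      push_neg at hgt
      linarith [mul_pos (ht0 k) hgt, h9]
    have key2 : ∀ k, ⟪b, w⟫ / ‖w‖ ≤ dist (qk k) q₀ := by
      intro k
      have h1 : qk k - q₀ = (z₀ - q₀) - (z₀ - qk k) := by abel
      have h2 : ⟪b, w⟫ ≤ ⟪qk k - q₀, w⟫ := by
        have e : ⟪qk k - q₀, w⟫ = ⟪b, w⟫ - ⟪z₀ - qk k, w⟫ := by
          rw [hbdef, ← inner_sub_left, h1]
        rw [e]
        linarith [key1 k]
      have h3 : ⟪qk k - q₀, w⟫ ≤ ‖qk k - q₀‖ * ‖w‖ := real_inner_le_norm _ _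
      rw [dist_eq_norm, div_le_iff₀ hwn]
      linarith
    have hqkb : ∀ k, qk k ∈ S ∩ closedBall z₀ (M + ε₀ * ‖w‖) := by
      intro k
      refine ⟨(hqk k).1, mem_closedBall.mpr ?_⟩
      have h1 : dist (qk k) (z₀ + t k • w) = infDist (z₀ + t k • w) S := by
        rw [dist_comm]; exact (hqk k).2
      have h2 : infDist (z₀ + t k • w) S ≤ M := hmax _ (hzkK k)
      have h3 : dist (z₀ + t k • w) z₀ = t k * ‖w‖ := by
        rw [dist_eq_norm, add_sub_cancel_left, norm_smul, Real.norm_eq_abs,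
          abs_of_pos (ht0 k)]
      have h4 : t k * ‖w‖ ≤ ε₀ * ‖w‖ := mul_le_mul_of_nonneg_right (htε k) (norm_nonneg w)
      calc dist (qk k) z₀ ≤ dist (qk k) (z₀ + t k • w) + dist (z₀ + t k • w) z₀ :=
            dist_triangle _ _ _
        _ ≤ M + ε₀ * ‖w‖ := by rw [h1, h3]; linarith
    have hcomp : IsCompact (S ∩ closedBall z₀ (M + ε₀ * ‖w‖)) :=
      (isCompact_closedBall _ _).inter_left hS
    obtain ⟨a, ⟨haS, _⟩, φ, hφ, hlim⟩ := hcomp.tendsto_subseq hqkb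
    have htlim : Filter.Tendsto (fun k => t (φ k)) Filter.atTop (nhds 0) := by
      apply squeeze_zero (fun k => (ht0 _).le) (fun k => ?_)
        tendsto_one_div_add_atTop_nhds_zero_nat
      calc t (φ k) ≤ 1/((φ k : ℝ)+1) := min_le_right _ _
        _ ≤ 1/((k:ℝ)+1) := by
            apply one_div_le_one_div_of_le (by positivity)
            have : (k:ℝ) ≤ (φ k : ℝ) := by exact_mod_cast hφ.le_apply
            linarith
    have hzlim : Filter.Tendsto (fun k => z₀ + t (φ k) • w) Filter.atTop (nhds z₀) := by
      have h1 := (htlim.smul_const w).const_add z₀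
      simpa using h1
    have hda : Filter.Tendsto (fun k => dist (z₀ + t (φ k) • w) (qk (φ k)))
        Filter.atTop (nhds (dist z₀ a)) := hzlim.dist hlim
    have hdi : Filter.Tendsto (fun k => dist (z₀ + t (φ k) • w) (qk (φ k)))
        Filter.atTop (nhds (infDist z₀ S)) := by
      have h1 : (fun k => dist (z₀ + t (φ k) • w) (qk (φ k)))
          = fun k => infDist (z₀ + t (φ k) • w) S := funext fun k => (hqk (φ k)).2
      rw [h1]
      exact ((continuous_infDist_pt S).tendsto z₀).comp hzlim
    have haz : dist z₀ a = infDist z₀ S := tendsto_nhds_unique hda hdi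
    have haq : a = q₀ := hsub z₀ hz₀K ⟨haS, haz⟩ hq₀
    have hcpos : 0 < ⟪b, w⟫ / ‖w‖ := div_pos hc hwn
    obtain ⟨N, hN⟩ := Metric.tendsto_atTop.mp hlim (⟪b, w⟫ / ‖w‖) hcpos
    have hNN := hN N le_rfl
    rw [haq] at hNN
    exact absurd hNN (not_lt.mpr (key2 (φ N)))
  -- the maximum is attained on the boundary sphere
  have hbne : ‖b‖ ≠ 0 := by rw [hbM]; exact hMpos.ne'
  have hzx : dist z₀ x = ρ := by
    have hle : dist z₀ x ≤ ρ := mem_closedBall.mp hz₀K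
    rcases eq_or_lt_of_le hle with h | h
    · exact h
    · exfalso
      have hdb := hdir b ⟨(ρ - dist z₀ x)/(‖b‖+1),
        div_pos (by linarith) (by positivity), ?_⟩
      · rw [real_inner_self_eq_norm_sq] at hdb
        nlinarith [hbM, hMpos]
      · intro s hs0 hsε
        rw [hKdef, mem_closedBall]
        have h1 : dist (z₀ + s • b) x ≤ dist (z₀ + s • b) z₀ + dist z₀ x :=
          dist_triangle _ _ _
        have h2 : dist (z₀ + s • b) z₀ = s * ‖b‖ := by
          rw [dist_eq_norm, add_sub_cancel_left, norm_smul, Real.norm_eq_abs,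
            abs_of_pos hs0]
        have h3 : s * (‖b‖+1) ≤ ρ - dist z₀ x :=
          (le_div_iff₀ (by positivity)).mp hsε
        nlinarith [norm_nonneg b]
  set n := z₀ - x with hndef
  have hnn : ‖n‖ = ρ := by rw [hndef, ← dist_eq_norm, hzx]
  have hhalf : ∀ w : EuclideanSpace ℝ (Fin d), ⟪n, w⟫ < 0 → ⟪b, w⟫ ≤ 0 := by
    intro w hw
    apply hdir
    refine ⟨(-2*⟪n, w⟫)/(‖w‖^2+1), div_pos (by linarith) (by positivity), ?_⟩
    intro s hs0 hsε
    rw [hKdef, mem_closedBall, dist_eq_norm]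
    have hzw : z₀ + s • w - x = n + s • w := by rw [hndef]; abel
    rw [hzw]
    have h5 := norm_add_sq_real n (s • w)
    have h6 : ⟪n, s • w⟫ = s * ⟪n, w⟫ := real_inner_smul_right _ _ _
    have h8 : ‖s • w‖^2 = s^2 * ‖w‖^2 := by
      rw [norm_smul, Real.norm_eq_abs, mul_pow, sq_abs]
    have hsb : s * (‖w‖^2+1) ≤ -2*⟪n, w⟫ := by
      rw [← le_div_iff₀ (by positivity)]; exact hsε
    have h9 : ‖n + s • w‖^2 ≤ ρ^2 := by
      have h10 : s * (s * ‖w‖^2) ≤ s * (-2*⟪n, w⟫ - s) := by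
        apply mul_le_mul_of_nonneg_left _ hs0.le
        nlinarith
      nlinarith [h5, h6, h8, hnn]
    nlinarith [norm_nonneg (n + s • w), hρ0, h9]
  have hcl : ∀ w : EuclideanSpace ℝ (Fin d), ⟪n, w⟫ ≤ 0 → ⟪b, w⟫ ≤ 0 := by
    intro w hw
    rcases lt_or_eq_of_le hw with h | h
    · exact hhalf w h
    · by_contra hbw
      push_neg at hbw
      have hbn : ∀ δ : ℝ, 0 < δ → ⟪b, w⟫ ≤ δ * ⟪b, n⟫ := by
        intro δ hδ
        have h1 : ⟪n, w - δ • n⟫ < 0 := by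
          rw [inner_sub_right, real_inner_smul_right, real_inner_self_eq_norm_sq, hnn, h]
          nlinarith [mul_pos hδ (pow_pos hρ0 2)]
        have h2 := hhalf _ h1
        rw [inner_sub_right, real_inner_smul_right] at h2
        linarith
      have h1 := hbn 1 one_pos
      have hbnpos : 0 < ⟪b, n⟫ := by linarith [h1, hbw]
      have h2 := hbn (⟪b, w⟫/(2*⟪b, n⟫)) (by positivity)
      have hne2 : (2*⟪b, n⟫ : ℝ) ≠ 0 := by positivity
      have h3 : (⟪b, w⟫/(2*⟪b, n⟫)) * (2*⟪b, n⟫) = ⟪b, w⟫ := div_mul_cancel₀ _ hne2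
      nlinarith [h2, h3, hbw]
  have hbn0 : 0 ≤ ⟪b, n⟫ := by
    have h1 : ⟪n, -n⟫ ≤ 0 := by
      rw [inner_neg_right, real_inner_self_eq_norm_sq, hnn]
      nlinarith [hρ0]
    have h2 := hcl (-n) h1
    rw [inner_neg_right] at h2
    linarith
  have hw1 : ⟪n, ρ^2 • b - ⟪b, n⟫ • n⟫ ≤ 0 := by
    rw [inner_sub_right, real_inner_smul_right, real_inner_smul_right,
      real_inner_self_eq_norm_sq, hnn, real_inner_comm n b]
    exact le_of_eq (by ring)
  have hw2 := hcl _ hw1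
  rw [inner_sub_right, real_inner_smul_right, real_inner_smul_right,
    real_inner_self_eq_norm_sq, hbM] at hw2
  -- hw2 : ρ^2 * M^2 - ⟪b,n⟫ * ⟪b,n⟫ ≤ 0  (as inner products)
  have hzero : ρ^2 • b - ⟪b, n⟫ • n = 0 := by
    have hns := norm_sub_sq_real (ρ^2 • b) (⟪b, n⟫ • n)
    have e1 : ⟪ρ^2 • b, ⟪b, n⟫ • n⟫ = ρ^2 * (⟪b, n⟫ * ⟪b, n⟫) := by
      rw [real_inner_smul_left, real_inner_smul_right]
    have e2 : ‖ρ^2 • b‖^2 = ρ^4 * M^2 := by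
      rw [norm_smul, Real.norm_eq_abs, mul_pow, sq_abs, hbM]; ring
    have e3 : ‖⟪b, n⟫ • n‖^2 = ⟪b, n⟫^2 * ρ^2 := by
      rw [norm_smul, Real.norm_eq_abs, mul_pow, sq_abs, hnn]
    have hsq : ‖ρ^2 • b - ⟪b, n⟫ • n‖^2 ≤ 0 := by
      rw [hns, e1, e2, e3]
      nlinarith [hw2, hρ0, sq_nonneg ⟪b, n⟫]
    have hnm : ‖ρ^2 • b - ⟪b, n⟫ • n‖ = 0 := by
      nlinarith [norm_nonneg (ρ^2 • b - ⟪b, n⟫ • n)]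
    exact norm_eq_zero.mp hnm
  have hβ : ⟪b, n⟫ = ρ * M := by
    have h1 : ρ^2 • b = ⟪b, n⟫ • n := sub_eq_zero.mp hzero
    have h2 : ‖ρ^2 • b‖ = ‖⟪b, n⟫ • n‖ := by rw [h1]
    rw [norm_smul, norm_smul, hbM, hnn, Real.norm_eq_abs, Real.norm_eq_abs,
      abs_of_nonneg (by positivity), abs_of_nonneg hbn0] at h2
    have h3 : (ρ * M) * ρ = ⟪b, n⟫ * ρ := by nlinarith
    exact (mul_right_cancel₀ hρ0.ne' h3).symm
  set μ := M / ρ with hμdef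
  have hμ1 : 1 < μ := (one_lt_div hρ0).mpr (lt_of_lt_of_le hρr hrM)
  have hb_eq : b = μ • n := by
    have h1 : ρ^2 • b = (ρ * M) • n := by rw [← hβ]; exact sub_eq_zero.mp hzero
    have h2 : (ρ^2)⁻¹ • (ρ^2 • b) = (ρ^2)⁻¹ • ((ρ * M) • n) := by rw [h1]
    rw [smul_smul, smul_smul, inv_mul_cancel₀ (by positivity), one_smul] at h2
    rw [h2, hμdef]
    congr 1
    field_simp
  have hμ0 : μ - 1 ≠ 0 := by intro h; exact absurd (by linarith : μ = 1) (by linarith)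
  have hb2 : z₀ - q₀ = μ • n := by rw [← hbdef]; exact hb_eq
  -- x lies on the segment from q₀ to z₀, hence q₀ projects x, hence q₀ = p
  have hxseg : q₀ + ((μ-1)/μ) • (z₀ - q₀) = x := by
    have hq0 : q₀ = z₀ - μ • n := by rw [← hb2]; abel
    have hx2 : x = z₀ - n := by rw [hndef]; abel
    rw [hb2, hq0, hx2, smul_smul, div_mul_cancel₀ _ (by linarith : μ ≠ 0)]
    module
  have hθ0' : 0 ≤ (μ-1)/μ := div_nonneg (by linarith) (by linarith)
  have hθ1' : (μ-1)/μ ≤ 1 := by rw [div_le_one (by linarith)]; linarith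
  have hq₀x : q₀ ∈ proj S x := by
    have h1 := proj_segment hq₀ hθ0' hθ1'
    rwa [hxseg] at h1
  have hq₀p : q₀ = p := hsub x (mem_closedBall_self hρ0.le) hq₀x hpx
  -- hence z₀ = p + c • u with c > r and proj S z₀ = {p}: contradiction
  have hc1 : (μ - 1) • n = r • u := by
    rw [hq₀p] at hb2
    have hx3 : x - p = r • u := by rw [hxdef, add_sub_cancel_left]
    calc (μ - 1) • n = μ • n - n := by module
      _ = (z₀ - p) - (z₀ - x) := by rw [← hb2, ← hndef]
      _ = x - p := by abel
      _ = r • u := hx3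
  have hn_eq : n = (r/(μ-1)) • u := by
    have h2 : (μ-1)⁻¹ • ((μ - 1) • n) = (μ-1)⁻¹ • (r • u) := by rw [hc1]
    rw [smul_smul, inv_mul_cancel₀ hμ0, one_smul, smul_smul] at h2
    rw [h2]
    congr 1
    field_simp
  have hz₀_eq : z₀ = p + (r + r/(μ-1)) • u := by
    have h1 : z₀ = x + n := by rw [hndef]; abel
    rw [h1, hn_eq, hxdef, add_smul]
    abel
  have hcL : (r + r/(μ-1)) ∈ L := by
    show proj S (p + (r + r/(μ-1)) • u) = {p}
    rw [← hz₀_eq]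
    have hpz₀ : p ∈ proj S z₀ := hq₀p ▸ hq₀
    exact (hsub z₀ hz₀K).eq_singleton_of_mem hpz₀
  have hle := le_csSup hBdd hcL
  have hpos2 : 0 < r/(μ-1) := div_pos hpos (by linarith)
  rw [← hrdef] at hle
  linarith
end

section
/- Let A be an invertible d×d real matrix with ‖A − I‖ ≤ ε < 1 (operator norm). Let u be a unit vector and u' = (Aᵀ)⁻¹u / |(Aᵀ)⁻¹u|. Then ⟨u, u'⟩ ≥ √(1 − ε²). -/
open Metric Set ContinuousLinearMap
open scoped RealInnerProductSpace

private lemma stmt9_aux (ε a n w c : ℝ) (hε0 : 0 ≤ ε) (hε : ε < 1) (hn0 : 0 ≤ n)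
    (hw : 0 < w) (hcs : |a| ≤ n) (hwsq : w ^ 2 = 1 - 2 * a + n ^ 2) (hc : c = 1 - a)
    (hne : n ≤ ε * w) : Real.sqrt (1 - ε ^ 2) ≤ c / w := by
  have hε2 : ε ^ 2 < 1 := by nlinarith
  have hn2 : n ^ 2 ≤ ε ^ 2 * w ^ 2 := by nlinarith
  have haa : a ≤ n := le_of_abs_le hcs
  have hkey : a ≤ 1 / 2 := by nlinarith [sq_nonneg n]
  have hc0 : 0 ≤ c := by rw [hc]; linarith
  have hmain : (1 - ε ^ 2) * w ^ 2 ≤ c ^ 2 := by rw [hc]; nlinarith [sq_nonneg a]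
  have h1 : (1 - ε ^ 2) ≤ (c / w) ^ 2 := by
    rw [div_pow, le_div_iff₀ (by positivity)]
    linarith
  calc Real.sqrt (1 - ε ^ 2) ≤ Real.sqrt ((c / w) ^ 2) := Real.sqrt_le_sqrt h1
    _ = c / w := Real.sqrt_sq (by positivity)

theorem stmt9 {d : ℕ}
    (A : EuclideanSpace ℝ (Fin d) ≃L[ℝ] EuclideanSpace ℝ (Fin d)) (ε : ℝ)
    (hε : ε < 1)
    (hA : ‖(A : EuclideanSpace ℝ (Fin d) →L[ℝ] EuclideanSpace ℝ (Fin d)) - 1‖ ≤ ε)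
    (u : EuclideanSpace ℝ (Fin d)) (hu : ‖u‖ = 1) :
    ⟪u, ‖ContinuousLinearMap.adjoint
          (A.symm : EuclideanSpace ℝ (Fin d) →L[ℝ] EuclideanSpace ℝ (Fin d)) u‖⁻¹ •
        ContinuousLinearMap.adjoint
          (A.symm : EuclideanSpace ℝ (Fin d) →L[ℝ] EuclideanSpace ℝ (Fin d)) u⟫ ≥
      Real.sqrt (1 - ε ^ 2) := by
  have hε0 : 0 ≤ ε := le_trans (norm_nonneg _) hA
  set T : EuclideanSpace ℝ (Fin d) →L[ℝ] EuclideanSpace ℝ (Fin d) :=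
    (A : EuclideanSpace ℝ (Fin d) →L[ℝ] EuclideanSpace ℝ (Fin d)) with hT
  set S : EuclideanSpace ℝ (Fin d) →L[ℝ] EuclideanSpace ℝ (Fin d) :=
    (A.symm : EuclideanSpace ℝ (Fin d) →L[ℝ] EuclideanSpace ℝ (Fin d)) with hS
  set v := ContinuousLinearMap.adjoint S u with hv
  have hST : S.comp T = ContinuousLinearMap.id ℝ _ := by
    ext x; simp [hS, hT]
  have hTv : ContinuousLinearMap.adjoint T v = u := by
    have := congrArg (fun f => ContinuousLinearMap.adjoint f u) hST
    simp only [ContinuousLinearMap.adjoint_comp, ContinuousLinearMap.adjoint_id,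
      ContinuousLinearMap.coe_comp', Function.comp_apply, ContinuousLinearMap.coe_id',
      id_eq] at this
    exact this
  have hv0 : v ≠ 0 := by
    intro h
    rw [h, map_zero] at hTv
    rw [← hTv] at hu
    simp at hu
  have hw : 0 < ‖v‖ := norm_pos_iff.mpr hv0
  have hadj : ‖ContinuousLinearMap.adjoint T - 1‖ = ‖T - 1‖ := by
    have h1 : ContinuousLinearMap.adjoint (T - 1) = ContinuousLinearMap.adjoint T - 1 := by
      rw [map_sub]
      congr 1
      simp [ContinuousLinearMap.one_def, ContinuousLinearMap.adjoint_id]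
    rw [← h1, LinearIsometryEquiv.norm_map]
  have he2 : u - v = (ContinuousLinearMap.adjoint T - 1) v := by
    simp [hTv]
  have hne : ‖u - v‖ ≤ ε * ‖v‖ := by
    rw [he2]
    calc ‖(ContinuousLinearMap.adjoint T - 1) v‖
        ≤ ‖ContinuousLinearMap.adjoint T - 1‖ * ‖v‖ := le_opNorm _ _
      _ ≤ ε * ‖v‖ := by rw [hadj]; gcongr
  have hcs : |⟪u, u - v⟫| ≤ ‖u - v‖ := by
    have := abs_real_inner_le_norm u (u - v)
    rwa [hu, one_mul] at this
  have hwsq : ‖v‖ ^ 2 = 1 - 2 * ⟪u, u - v⟫ + ‖u - v‖ ^ 2 := by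
    have h := norm_sub_sq_real u (u - v)
    simp only [sub_sub_cancel] at h
    rw [h, hu]; ring
  have hc : ⟪u, v⟫ = 1 - ⟪u, u - v⟫ := by
    have h1 : ⟪u, u - v⟫ = ⟪u, u⟫ - ⟪u, v⟫ := inner_sub_right u u v
    have hu2 : ⟪u, u⟫ = (1 : ℝ) := by
      rw [real_inner_self_eq_norm_sq, hu]; norm_num
    rw [h1, hu2]; ring
  have main := stmt9_aux ε ⟪u, u - v⟫ ‖u - v‖ ‖v‖ ⟪u, v⟫ hε0 hε (norm_nonneg _) hw hcs
    hwsq hc hne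
  rw [real_inner_smul_right, ge_iff_le, inv_mul_eq_div]
  exact main
end

section
/- Let S ⊆ ℝ^d be closed, p ∈ S, u a unit vector with positive projection range, and 0 < λ ≤ d(p,u,π_S). Then the open ball of centre p + λu and radius λ is disjoint from S, and for λ < d(p,u,π_S) the closed ball B(p+λu, λ) meets S exactly in {p}. -/
open Metric Set

theorem stmt13 {d : ℕ} (S : Set (EuclideanSpace ℝ (Fin d))) (hS : IsClosed S)
    (p : EuclideanSpace ℝ (Fin d)) (hp : p ∈ S)
    (u : EuclideanSpace ℝ (Fin d)) (hu : ‖u‖ = 1) (lam : ℝ) (hlam : 0 < lam)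
    (hle : ¬ BddAbove {l : ℝ | proj S (p + l • u) = {p}} ∨
      lam ≤ sSup {l : ℝ | proj S (p + l • u) = {p}}) :
    Metric.ball (p + lam • u) lam ∩ S = ∅ ∧
    ((¬ BddAbove {l : ℝ | proj S (p + l • u) = {p}} ∨
        lam < sSup {l : ℝ | proj S (p + l • u) = {p}}) →
      Metric.closedBall (p + lam • u) lam ∩ S = {p}) := by
  set T := {l : ℝ | proj S (p + l • u) = {p}} with hT
  have hdist : ∀ (l : ℝ), dist (p + l • u) p = |l| := by
    intro l
    rw [dist_eq_norm, add_sub_cancel_left, norm_smul, hu, Real.norm_eq_abs, mul_one]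
  have hdd : ∀ (l m : ℝ), dist (p + l • u) (p + m • u) = |l - m| := by
    intro l m
    rw [dist_eq_norm, add_sub_add_left_eq_sub, ← sub_smul, norm_smul, hu,
      Real.norm_eq_abs, mul_one]
  have h0 : (0:ℝ) ∈ T := by
    simp only [hT, mem_setOf_eq, zero_smul, add_zero]
    ext q
    simp only [proj, mem_setOf_eq, Metric.infDist_zero_of_mem hp, mem_singleton_iff]
    constructor
    · rintro ⟨_, h⟩; exact (dist_eq_zero.mp h).symm
    · rintro rfl; exact ⟨hp, dist_self _⟩
  have hinf : ∀ l ∈ T, 0 < l → Metric.infDist (p + l • u) S = l := by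
    intro l hl hpos
    have hpmem : p ∈ proj S (p + l • u) := by
      rw [show proj S (p + l • u) = {p} from hl]; rfl
    have h2 := hpmem.2
    rw [hdist] at h2
    rw [← h2, abs_of_pos hpos]
  constructor
  · rw [eq_empty_iff_forall_notMem]
    rintro x ⟨hxb, hxS⟩
    rw [Metric.mem_ball, dist_comm] at hxb
    set δ := lam - dist (p + lam • u) x with hδ
    have hδpos : 0 < δ := by simp only [hδ]; linarith
    have hδle : δ ≤ lam := by
      have := dist_nonneg (x := p + lam • u) (y := x); linarith
    obtain ⟨l, hlT, hlgt⟩ : ∃ l ∈ T, lam - δ/2 < l := by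
      rcases hle with h | h
      · exact (not_bddAbove_iff.mp h) _
      · exact exists_lt_of_lt_csSup ⟨0, h0⟩ (by linarith)
    have hlpos : 0 < l := by linarith
    have h1 : l ≤ dist (p + l • u) x := by
      have h := Metric.infDist_le_dist_of_mem (x := p + l • u) hxS
      rw [hinf l hlT hlpos] at h
      exact h
    have h2 : dist (p + l • u) x ≤ |l - lam| + (lam - δ) := by
      calc dist (p + l • u) x ≤ dist (p + l • u) (p + lam • u) + dist (p + lam • u) x :=
            dist_triangle _ _ _
        _ = |l - lam| + (lam - δ) := by rw [hdd, hδ]; ring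
    rcases abs_cases (l - lam) with ⟨he, _⟩ | ⟨he, _⟩ <;> rw [he] at h2 <;> linarith
  · intro hstrict
    obtain ⟨l, hlT, hlgt⟩ : ∃ l ∈ T, lam < l := by
      rcases hstrict with h | h
      · exact (not_bddAbove_iff.mp h) lam
      · exact exists_lt_of_lt_csSup ⟨0, h0⟩ h
    have hlpos : 0 < l := lt_trans hlam hlgt
    have hproj : proj S (p + l • u) = {p} := hlT
    ext x
    simp only [mem_inter_iff, Metric.mem_closedBall, mem_singleton_iff]
    constructor
    · rintro ⟨hxb, hxS⟩
      have h1 : l ≤ dist (p + l • u) x := by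
        have h := Metric.infDist_le_dist_of_mem (x := p + l • u) hxS
        rw [hinf l hlT hlpos] at h
        exact h
      have h2 : dist (p + l • u) x ≤ |l - lam| + lam := by
        calc dist (p + l • u) x ≤ dist (p + l • u) (p + lam • u) + dist (p + lam • u) x :=
              dist_triangle _ _ _
          _ ≤ |l - lam| + lam := by rw [hdd]; rw [dist_comm x] at hxb; linarith
      rw [abs_of_pos (sub_pos.mpr hlgt)] at h2
      have heq : dist (p + l • u) x = l := le_antisymm (by linarith) h1
      have hx : x ∈ proj S (p + l • u) := ⟨hxS, by rw [heq, hinf l hlT hlpos]⟩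
      rw [hproj] at hx
      exact hx
    · rintro rfl
      exact ⟨by rw [dist_comm, hdist, abs_of_pos hlam], hp⟩
end

section
/- Let S ⊆ ℝ^d be closed with reach rch(S) > 0, and let F : U → ℝ^d be injective and continuously differentiable on an open neighbourhood U = {x : dist(x,S) < s} of S (s > 0), with F, F⁻¹, DF Lipschitz with constants Lip(F), Lip(F⁻¹), Lip(DF). Then for every 0 < t < rch(S), rch(F(S)) ≥ min( s / Lip(F⁻¹), 1 / ((Lip(F)/t + Lip(DF)) · Lip(F⁻¹)²) ). -/
set_option maxHeartbeats 4000000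

open Metric Set Filter
open scoped ENNReal NNReal RealInnerProductSpace Topology

/-- The reach of a set, as the infimum over points of the set of the (extended)
distance to the medial axis. -/
noncomputable def reach {d : ℕ} (S : Set (EuclideanSpace ℝ (Fin d))) : ℝ≥0∞ :=
  ⨅ p ∈ S, EMetric.infEdist p (medialAxis S)

namespace Reach14

variable {d : ℕ}

abbrev Eu (d : ℕ) := EuclideanSpace ℝ (Fin d)

lemma le_infDist' {s : Set (Eu d)} (hne : s.Nonempty) {x : Eu d} {b : ℝ}
    (h : ∀ y ∈ s, b ≤ dist x y) : b ≤ infDist x s := by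
  rw [Metric.infDist_eq_iInf]
  haveI := hne.to_subtype
  exact le_ciInf (fun y => h y y.2)

/-- a choice of nearest point -/
noncomputable def nrp (S : Set (Eu d)) (hS : IsClosed S) (hne : S.Nonempty) (x : Eu d) :
    Eu d := (hS.exists_infDist_eq_dist hne x).choose

lemma nrp_mem (S : Set (Eu d)) (hS : IsClosed S) (hne : S.Nonempty) (x : Eu d) :
    nrp S hS hne x ∈ S := (hS.exists_infDist_eq_dist hne x).choose_spec.1

lemma dist_nrp (S : Set (Eu d)) (hS : IsClosed S) (hne : S.Nonempty) (x : Eu d) :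
    infDist x S = dist x (nrp S hS hne x) := (hS.exists_infDist_eq_dist hne x).choose_spec.2

lemma nrp_unique {S : Set (Eu d)} (hS : IsClosed S) (hne : S.Nonempty) {t : ℝ}
    (H : ∀ x : Eu d, (∃ p ∈ S, dist x p ≤ t) → (proj S x).Subsingleton)
    {z q : Eu d} (hzt : infDist z S ≤ t) (hq : q ∈ S) (hdq : dist z q = infDist z S) :
    q = nrp S hS hne z := by
  have h1 : nrp S hS hne z ∈ proj S z := ⟨nrp_mem S hS hne z, (dist_nrp S hS hne z).symm⟩
  have h2 : q ∈ proj S z := ⟨hq, hdq⟩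
  have hsub := H z ⟨nrp S hS hne z, nrp_mem S hS hne z,
    by rw [← dist_nrp S hS hne z]; exact hzt⟩
  exact hsub h2 h1

lemma H_of_reach {S : Set (Eu d)} {t : ℝ} (htr : ENNReal.ofReal t < reach S) :
    ∀ x : Eu d, (∃ p ∈ S, dist x p ≤ t) → (proj S x).Subsingleton := by
  intro x ⟨p, hp, hdist⟩
  by_contra hns
  rw [Set.not_subsingleton_iff] at hns
  have hx : x ∈ medialAxis S := hns
  have h1 : reach S ≤ EMetric.infEdist p (medialAxis S) := by
    exact iInf₂_le p hp
  have h2 : EMetric.infEdist p (medialAxis S) ≤ edist p x :=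
    EMetric.infEdist_le_edist_of_mem hx
  have h3 : edist p x ≤ ENNReal.ofReal t := by
    rw [edist_dist]
    exact ENNReal.ofReal_le_ofReal (by rwa [dist_comm])
  exact absurd ((h1.trans h2).trans h3) (not_le.mpr htr)

lemma nrp_cont {S : Set (Eu d)} (hS : IsClosed S) (hne : S.Nonempty) {t : ℝ}
    (H : ∀ x : Eu d, (∃ p ∈ S, dist x p ≤ t) → (proj S x).Subsingleton)
    {z : Eu d} (hzt : infDist z S ≤ t) :
    ∀ ρ : ℝ, 0 < ρ → ∃ η > 0, ∀ z' : Eu d, dist z' z ≤ η →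
      dist (nrp S hS hne z') (nrp S hS hne z) ≤ ρ := by
  by_contra hcon
  push_neg at hcon
  obtain ⟨ρ, hρ, hall⟩ := hcon
  have hseq : ∀ n : ℕ, ∃ z' : Eu d, dist z' z ≤ 1 / (n + 1) ∧
      ρ < dist (nrp S hS hne z') (nrp S hS hne z) := by
    intro n
    obtain ⟨z', h1, h2⟩ := hall (1 / (n + 1)) (by positivity)
    exact ⟨z', h1, h2⟩
  choose zs hzs hρs using hseq
  set qs : ℕ → Eu d := fun n => nrp S hS hne (zs n) with hqs
  have hqsS : ∀ n, qs n ∈ S := fun n => nrp_mem S hS hne (zs n)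
  have hdzs1 : ∀ n : ℕ, dist (zs n) z ≤ 1 := by
    intro n
    refine (hzs n).trans ?_
    rw [div_le_one (by positivity)]
    have : (0:ℝ) ≤ n := Nat.cast_nonneg n
    linarith
  have hqsball : ∀ n, qs n ∈ closedBall z (infDist z S + 2) := by
    intro n
    rw [mem_closedBall, dist_comm]
    have h1 : dist z (qs n) ≤ dist z (zs n) + dist (zs n) (qs n) := dist_triangle _ _ _
    have h2 : dist (zs n) (qs n) = infDist (zs n) S := (dist_nrp S hS hne (zs n)).symm
    have h3 : infDist (zs n) S ≤ infDist z S + dist (zs n) z := infDist_le_infDist_add_dist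
    have h4 := hdzs1 n
    rw [dist_comm z (zs n)] at h1
    linarith
  obtain ⟨a, _, φ, hφ, hconv⟩ := tendsto_subseq_of_bounded
    (isBounded_closedBall (x := z) (r := infDist z S + 2)) hqsball
  have haS : a ∈ S := hS.mem_of_tendsto hconv (Eventually.of_forall (fun n => hqsS (φ n)))
  have htz0 : Tendsto (fun n : ℕ => dist (zs (φ n)) z) atTop (𝓝 0) := by
    refine squeeze_zero (fun n => dist_nonneg) (fun n => (hzs (φ n)).trans ?_)
      tendsto_one_div_add_atTop_nhds_zero_nat
    have h1 : (n:ℝ) + 1 ≤ (φ n : ℝ) + 1 := by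
      have : n ≤ φ n := hφ.le_apply
      have h0 : (n:ℝ) ≤ φ n := by exact_mod_cast this
      linarith
    exact one_div_le_one_div_of_le (by positivity) h1
  have h1 : Tendsto (fun n => dist z (qs (φ n))) atTop (𝓝 (dist z a)) :=
    tendsto_const_nhds.dist hconv
  have hup : ∀ n, dist z (qs (φ n)) ≤ infDist z S + 2 * dist (zs (φ n)) z := by
    intro n
    have ht1 : dist z (qs (φ n)) ≤ dist z (zs (φ n)) + dist (zs (φ n)) (qs (φ n)) :=
      dist_triangle _ _ _
    have h2 : dist (zs (φ n)) (qs (φ n)) = infDist (zs (φ n)) S :=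
      (dist_nrp S hS hne (zs (φ n))).symm
    have h3 : infDist (zs (φ n)) S ≤ infDist z S + dist (zs (φ n)) z :=
      infDist_le_infDist_add_dist
    rw [dist_comm z (zs (φ n))] at ht1
    linarith
  have hle : dist z a ≤ infDist z S := by
    have h2 : Tendsto (fun n : ℕ => infDist z S + 2 * dist (zs (φ n)) z) atTop
        (𝓝 (infDist z S + 2 * 0)) := tendsto_const_nhds.add (htz0.const_mul 2)
    rw [mul_zero, add_zero] at h2
    exact le_of_tendsto_of_tendsto' h1 h2 hup
  have hge : infDist z S ≤ dist z a :=
    ge_of_tendsto h1 (Eventually.of_forall (fun n => infDist_le_dist_of_mem (hqsS (φ n))))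
  have ha : a = nrp S hS hne z := nrp_unique hS hne H hzt haS (le_antisymm hle hge)
  have hfar : ρ ≤ dist a (nrp S hS hne z) := by
    refine ge_of_tendsto (hconv.dist (tendsto_const_nhds (x := nrp S hS hne z)))
      (Eventually.of_forall (fun n => (hρs (φ n)).le))
  rw [← ha, dist_self] at hfar
  exact absurd hfar (not_le.mpr hρ)


lemma step {S : Set (Eu d)} (hS : IsClosed S) (hne : S.Nonempty) {t : ℝ}
    (H : ∀ x : Eu d, (∃ p ∈ S, dist x p ≤ t) → (proj S x).Subsingleton)
    {z : Eu d} (hz0 : 0 < infDist z S) (hzt : infDist z S ≤ t)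
    {ε' : ℝ} (hε'0 : 0 < ε') (hε'1 : ε' ≤ 1) :
    ∃ η > 0, ∀ h : ℝ, 0 ≤ h → h ≤ η →
      infDist z S + (1 - ε') * h ≤
        infDist (z + h • ((infDist z S)⁻¹ • (z - nrp S hS hne z))) S := by
  set D := infDist z S with hD
  set q0 := nrp S hS hne z with hq0
  set wv : Eu d := D⁻¹ • (z - q0) with hwv
  have hzq0 : ‖z - q0‖ = D := by
    rw [← dist_eq_norm]; exact (dist_nrp S hS hne z).symm
  have hw1 : ‖wv‖ = 1 := by
    rw [hwv, norm_smul, hzq0, Real.norm_eq_abs, abs_of_pos (inv_pos.mpr hz0)]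
    field_simp
  set ρ := ε' * D / 3 with hρdef
  have hρ0 : 0 < ρ := by positivity
  obtain ⟨η, hη0, hηc⟩ := nrp_cont hS hne H hzt ρ hρ0
  refine ⟨η, hη0, ?_⟩
  intro h h0 hhη
  set zh := z + h • wv with hzh
  set qh := nrp S hS hne zh with hqh
  have hqhS : qh ∈ S := nrp_mem S hS hne zh
  have hdzh : infDist zh S = ‖zh - qh‖ := by
    rw [dist_nrp S hS hne zh, dist_eq_norm]
  have hdzhz : dist zh z ≤ η := by
    rw [hzh, dist_eq_norm, add_sub_cancel_left, norm_smul, hw1, mul_one,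
      Real.norm_eq_abs, abs_of_nonneg h0]
    exact hhη
  have hqq : dist qh q0 ≤ ρ := hηc zh hdzhz
  set a : Eu d := z - qh with ha
  have haD : D ≤ ‖a‖ := by
    rw [ha, ← dist_eq_norm]
    exact infDist_le_dist_of_mem hqhS
  have haU : ‖a‖ ≤ D + ρ := by
    have h1 : ‖a‖ ≤ ‖z - q0‖ + ‖q0 - qh‖ := by
      rw [ha]
      have : z - qh = (z - q0) + (q0 - qh) := by abel
      rw [this]; exact norm_add_le _ _
    have h2 : ‖q0 - qh‖ ≤ ρ := by rw [← dist_eq_norm, dist_comm]; exact hqq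
    linarith [hzq0 ▸ h1]
  have hinner : D - ρ ≤ ⟪a, wv⟫ := by
    have hsplit : ⟪a, wv⟫ = ⟪z - q0, wv⟫ + ⟪q0 - qh, wv⟫ := by
      rw [← inner_add_left]
      congr 1
      rw [ha]; abel
    have h1 : ⟪z - q0, wv⟫ = D := by
      rw [hwv, real_inner_smul_right, real_inner_self_eq_norm_sq, hzq0]
      field_simp
    have h3 : ‖q0 - qh‖ ≤ ρ := by rw [← dist_eq_norm, dist_comm]; exact hqq
    have h4 : |⟪q0 - qh, wv⟫| ≤ ρ := by
      refine (abs_real_inner_le_norm (q0 - qh) wv).trans ?_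
      rw [hw1, mul_one]; exact h3
    have h2 : -ρ ≤ ⟪q0 - qh, wv⟫ := (abs_le.mp h4).1
    linarith [hsplit, h1, h2]
  have hCS : ⟪a, zh - qh⟫ ≤ ‖a‖ * ‖zh - qh‖ := real_inner_le_norm a _
  have hexp : ⟪a, zh - qh⟫ = ‖a‖ ^ 2 + h * ⟪a, wv⟫ := by
    have hrw : zh - qh = a + h • wv := by rw [hzh, ha]; abel
    rw [hrw, inner_add_right, real_inner_self_eq_norm_sq, real_inner_smul_right]
  have he3 : (1 - ε') * ‖a‖ ≤ D - ρ := by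
    have ha1 : (1 - ε') * (D + ρ) ≤ D - ρ := by
      rw [hρdef]; nlinarith [hz0, hε'0, hε'1]
    have ha2 : (1 - ε') * ‖a‖ ≤ (1 - ε') * (D + ρ) :=
      mul_le_mul_of_nonneg_left haU (by linarith)
    linarith
  have he4 : h * ((1 - ε') * ‖a‖) ≤ h * (D - ρ) := mul_le_mul_of_nonneg_left he3 h0
  have he5 : h * (D - ρ) ≤ h * ⟪a, wv⟫ := mul_le_mul_of_nonneg_left hinner h0
  have hkey : ‖a‖ * (‖a‖ + (1 - ε') * h) ≤ ‖a‖ * ‖zh - qh‖ := by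
    have : ‖a‖ * (‖a‖ + (1 - ε') * h) = ‖a‖ ^ 2 + h * ((1 - ε') * ‖a‖) := by ring
    rw [this]
    linarith [hCS, hexp, he4, he5]
  have hpos : 0 < ‖a‖ := lt_of_lt_of_le hz0 haD
  have hfin : ‖a‖ + (1 - ε') * h ≤ ‖zh - qh‖ := le_of_mul_le_mul_left hkey hpos
  rw [hdzh]
  linarith


lemma extension {S : Set (Eu d)} (hS : IsClosed S) (hne : S.Nonempty) {t : ℝ}
    (H : ∀ x : Eu d, (∃ p ∈ S, dist x p ≤ t) → (proj S x).Subsingleton)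
    {p : Eu d} (hp : p ∈ S) {w : Eu d} (hw : ‖w‖ = 1) {ε : ℝ} (hε : 0 < ε)
    (hball : ∀ q ∈ S, ε ≤ dist (p + ε • w) q) :
    ∀ lam : ℝ, 0 ≤ lam → lam < t → ∀ q ∈ S, lam ≤ dist (p + lam • w) q := by
  have hdist2 : ∀ a b : ℝ, dist (p + a • w) (p + b • w) = |a - b| := by
    intro a b
    rw [dist_eq_norm]
    have : p + a • w - (p + b • w) = (a - b) • w := by
      rw [sub_smul]; abel
    rw [this, norm_smul, hw, mul_one, Real.norm_eq_abs]
  have hdistp : ∀ a : ℝ, 0 ≤ a → dist (p + a • w) p = a := by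
    intro a ha
    rw [dist_eq_norm, add_sub_cancel_left, norm_smul, hw, mul_one, Real.norm_eq_abs,
      abs_of_nonneg ha]
  have hmono : ∀ a b : ℝ, 0 ≤ a → a ≤ b → (∀ q ∈ S, b ≤ dist (p + b • w) q) →
      ∀ q ∈ S, a ≤ dist (p + a • w) q := by
    intro a b ha hab hb q hq
    have h1 : dist (p + b • w) q ≤ dist (p + b • w) (p + a • w) + dist (p + a • w) q :=
      dist_triangle _ _ _
    have h2 : dist (p + b • w) (p + a • w) = b - a := by
      rw [hdist2, abs_of_nonneg (by linarith)]
    linarith [hb q hq]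
  intro lam hlam0 hlamt
  by_cases hcase : lam ≤ ε
  · exact hmono lam ε hlam0 hcase hball
  push_neg at hcase
  set B := {x : ℝ | x ∈ Icc ε lam ∧ ∀ q ∈ S, x ≤ dist (p + x • w) q} with hB
  have hεB : ε ∈ B := ⟨⟨le_refl ε, hcase.le⟩, hball⟩
  have hBbdd : BddAbove B := ⟨lam, fun x hx => hx.1.2⟩
  have hBne : B.Nonempty := ⟨ε, hεB⟩
  set χ := sSup B with hχ
  have hχub : χ ≤ lam := csSup_le hBne (fun x hx => hx.1.2)
  have hχlb : ε ≤ χ := le_csSup hBbdd hεB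
  have hχ0 : 0 < χ := lt_of_lt_of_le hε hχlb
  have hgood : ∀ q ∈ S, χ ≤ dist (p + χ • w) q := by
    intro q hq
    by_contra hlt
    push_neg at hlt
    obtain ⟨x, hxB, hxgt⟩ := exists_lt_of_lt_csSup hBne
      (show χ - (χ - dist (p + χ • w) q) / 2 < χ by linarith)
    have hxχ : x ≤ χ := le_csSup hBbdd hxB
    have h1 : x ≤ dist (p + x • w) q := hxB.2 q hq
    have h2 : dist (p + x • w) q ≤ dist (p + x • w) (p + χ • w) + dist (p + χ • w) q :=
      dist_triangle _ _ _
    have h3 : dist (p + x • w) (p + χ • w) = χ - x := by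
      rw [hdist2, abs_of_nonpos (by linarith), neg_sub]
    linarith
  by_cases hχeq : χ = lam
  · rw [← hχeq]; exact hgood
  have hχlt : χ < lam := lt_of_le_of_ne hχub hχeq
  exfalso
  set σ := min (χ / 2) (lam - χ) with hσ
  have hσ0 : 0 < σ := lt_min (by linarith) (by linarith)
  have hσχ : σ ≤ χ / 2 := min_le_left _ _
  have hσlam : χ + σ ≤ lam := by have := min_le_right (χ / 2) (lam - χ); linarith
  set x0 := p + χ • w with hx0
  have hδx0 : infDist x0 S = χ := by
    refine le_antisymm ?_ (le_infDist' hne hgood)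
    have := infDist_le_dist_of_mem (x := x0) hp
    rwa [hdistp χ hχ0.le] at this
  have claim1 : ∀ ε' : ℝ, 0 < ε' → ε' ≤ 1 →
      ∃ y ∈ closedBall x0 σ, χ + (1 - ε') * σ ≤ infDist y S := by
    intro ε' hε'0 hε'1
    set Q := {τ : ℝ | τ ∈ Icc 0 σ ∧ ∃ y ∈ closedBall x0 τ, χ + (1 - ε') * τ ≤ infDist y S}
      with hQ
    have h0Q : (0:ℝ) ∈ Q := by
      refine ⟨⟨le_refl 0, hσ0.le⟩, x0, mem_closedBall_self (le_refl 0), ?_⟩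
      rw [hδx0]; simp
    have hQbdd : BddAbove Q := ⟨σ, fun x hx => hx.1.2⟩
    have hQne : Q.Nonempty := ⟨0, h0Q⟩
    set β := sSup Q with hβ
    have hβub : β ≤ σ := csSup_le hQne (fun x hx => hx.1.2)
    have hβlb : (0:ℝ) ≤ β := le_csSup hQbdd h0Q
    obtain ⟨ym, hymball, hymmax⟩ := (isCompact_closedBall x0 β).exists_isMaxOn
      ⟨x0, mem_closedBall_self hβlb⟩ ((continuous_infDist_pt S).continuousOn)
    have hymlb : χ + (1 - ε') * β ≤ infDist ym S := by
      by_contra hlt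
      push_neg at hlt
      set η := χ + (1 - ε') * β - infDist ym S with hη
      have hη0 : 0 < η := by rw [hη]; linarith
      obtain ⟨τ, hτQ, hτgt⟩ := exists_lt_of_lt_csSup hQne (show β - η < β by linarith)
      obtain ⟨y, hyb, hyv⟩ := hτQ.2
      have hτβ : τ ≤ β := le_csSup hQbdd hτQ
      have hyβ : y ∈ closedBall x0 β := closedBall_subset_closedBall hτβ hyb
      have hchain : infDist y S ≤ infDist ym S := (isMaxOn_iff.mp hymmax) y hyβ
      nlinarith [sub_nonneg.mpr hτβ, hε'0, hε'1]
    have hβQ : β ∈ Q := ⟨⟨hβlb, hβub⟩, ym, hymball, hymlb⟩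
    by_cases hβσ : β = σ
    · exact ⟨ym, hβσ ▸ hymball, hβσ ▸ hymlb⟩
    have hβlt : β < σ := lt_of_le_of_ne hβub hβσ
    exfalso
    have hym0 : 0 < infDist ym S := by nlinarith [hχ0, hβlb, hε'1]
    have hymt : infDist ym S ≤ t := by
      have h1 : infDist ym S ≤ infDist x0 S + dist ym x0 := infDist_le_infDist_add_dist
      have h2 : dist ym x0 ≤ β := mem_closedBall.mp hymball
      rw [hδx0] at h1
      linarith
    obtain ⟨η, hη0, hstep⟩ := step hS hne H hym0 hymt hε'0 hε'1
    set h := min η (σ - β) with hh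
    have hh0 : 0 < h := lt_min hη0 (by linarith)
    set dir := (infDist ym S)⁻¹ • (ym - nrp S hS hne ym) with hdir
    have hdirn : ‖dir‖ = 1 := by
      rw [hdir, norm_smul, Real.norm_eq_abs, abs_of_pos (inv_pos.mpr hym0),
        ← dist_eq_norm, ← dist_nrp S hS hne ym]
      field_simp
    set y' := ym + h • dir with hy'
    have hy'v : infDist ym S + (1 - ε') * h ≤ infDist y' S :=
      hstep h hh0.le (min_le_left _ _)
    have hy'ym : dist y' ym = h := by
      rw [hy', dist_eq_norm, add_sub_cancel_left, norm_smul, hdirn, mul_one,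
        Real.norm_eq_abs, abs_of_nonneg hh0.le]
    have hy'ball : y' ∈ closedBall x0 (β + h) := by
      rw [mem_closedBall]
      have h1 : dist y' x0 ≤ dist y' ym + dist ym x0 := dist_triangle _ _ _
      have h2 : dist ym x0 ≤ β := mem_closedBall.mp hymball
      rw [hy'ym] at h1
      linarith
    have hτ'Q : (β + h) ∈ Q := by
      refine ⟨⟨by linarith, by linarith [min_le_right η (σ - β)]⟩, y', hy'ball, ?_⟩
      nlinarith [hymlb, hy'v]
    have := le_csSup hQbdd hτ'Q
    linarith
  obtain ⟨ys, hysball, hysmax⟩ := (isCompact_closedBall x0 σ).exists_isMaxOn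
    ⟨x0, mem_closedBall_self hσ0.le⟩ ((continuous_infDist_pt S).continuousOn)
  have h1 : ∀ ε' : ℝ, 0 < ε' → ε' ≤ 1 → χ + (1 - ε') * σ ≤ infDist ys S := by
    intro ε' h1 h2
    obtain ⟨y, hyb, hyv⟩ := claim1 ε' h1 h2
    exact hyv.trans ((isMaxOn_iff.mp hysmax) y hyb)
  have hup : infDist ys S ≤ χ + σ := by
    have ha : infDist ys S ≤ infDist x0 S + dist ys x0 := infDist_le_infDist_add_dist
    have hb : dist ys x0 ≤ σ := mem_closedBall.mp hysball
    rw [hδx0] at ha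
    linarith
  have heq : infDist ys S = χ + σ := by
    refine le_antisymm hup ?_
    by_contra hlt
    push_neg at hlt
    have hgχ : χ ≤ infDist ys S := by
      have h1' := h1 1 one_pos le_rfl
      linarith
    set ε' := (χ + σ - infDist ys S) / (2 * σ) with hε'
    have hε'0 : 0 < ε' := by apply div_pos <;> [linarith; linarith]
    have hε'1 : ε' ≤ 1 := by
      rw [hε', div_le_one (by linarith)]
      linarith
    have := h1 ε' hε'0 hε'1
    have hεσ : ε' * σ = (χ + σ - infDist ys S) / 2 := by
      rw [hε']
      field_simp
    nlinarith
  have hd1 : dist ys x0 = σ := by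
    have hle : dist ys x0 ≤ σ := mem_closedBall.mp hysball
    have ha : infDist ys S ≤ infDist x0 S + dist ys x0 := infDist_le_infDist_add_dist
    rw [hδx0, heq] at ha
    linarith
  have hd2 : dist ys p = χ + σ := by
    have hle : dist ys p ≤ dist ys x0 + dist x0 p := dist_triangle _ _ _
    have h2 : dist x0 p = χ := hdistp χ hχ0.le
    have hge : infDist ys S ≤ dist ys p := infDist_le_dist_of_mem hp
    rw [heq] at hge
    linarith
  have hvec : ys - x0 = σ • w := by
    have e1 : ‖ys - x0‖ = σ := by rw [← dist_eq_norm]; exact hd1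
    have e2 : ‖ys - p‖ = χ + σ := by rw [← dist_eq_norm]; exact hd2
    have e3 : ys - p = (ys - x0) + χ • w := by rw [hx0]; abel
    have e4 : ‖ys - p‖ ^ 2 = ‖ys - x0‖ ^ 2 + 2 * ⟪ys - x0, χ • w⟫ + ‖χ • w‖ ^ 2 := by
      rw [e3]
      rw [← real_inner_self_eq_norm_sq, ← real_inner_self_eq_norm_sq,
        ← real_inner_self_eq_norm_sq]
      rw [inner_add_add_self, real_inner_comm (χ • w) (ys - x0)]
      ring
    have e5 : ⟪ys - x0, χ • w⟫ = χ * ⟪ys - x0, w⟫ := real_inner_smul_right _ _ _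
    have e6 : ‖χ • w‖ = χ := by
      rw [norm_smul, hw, mul_one, Real.norm_eq_abs, abs_of_pos hχ0]
    have e7 : ⟪ys - x0, w⟫ = σ := by
      rw [e1, e2, e5, e6] at e4
      nlinarith [e4, hχ0]
    have e8 : ⟪ys - x0, w⟫ = ‖ys - x0‖ * ‖w‖ := by rw [e1, hw, mul_one, e7]
    have e9 := inner_eq_norm_mul_iff_real.mp e8
    rw [hw, e1, one_smul] at e9
    exact e9
  have hyseq : ys = p + (χ + σ) • w := by
    have : ys = x0 + σ • w := by
      rw [← hvec]; abel
    rw [this, hx0, add_smul]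
    abel
  have hgoodχσ : ∀ q ∈ S, χ + σ ≤ dist (p + (χ + σ) • w) q := by
    intro q hq
    rw [← hyseq, ← heq]
    exact infDist_le_dist_of_mem hq
  have hmem : χ + σ ∈ B := ⟨⟨by linarith, hσlam⟩, hgoodχσ⟩
  have := le_csSup hBbdd hmem
  linarith


lemma taylor {U : Set (Eu d)} (hU : IsOpen U) {F : Eu d → Eu d} {KDF : ℝ≥0}
    (hC1 : ContDiffOn ℝ 1 F U) (hLDF : LipschitzOnWith KDF (fderiv ℝ F) U)
    {x y : Eu d} (hseg : ∀ θ : ℝ, θ ∈ Icc (0:ℝ) 1 → x + θ • (y - x) ∈ U) :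
    ‖F y - F x - fderiv ℝ F x (y - x)‖ ≤ KDF / 2 * ‖y - x‖ ^ 2 := by
  set L : ℝ → Eu d := fun θ => x + θ • (y - x) with hL
  set A := fderiv ℝ F x with hA
  have hxU : x ∈ U := by
    have := hseg 0 ⟨le_refl 0, zero_le_one⟩
    simpa [hL] using this
  have hLd : ∀ θ : ℝ, HasDerivAt L (y - x) θ := by
    intro θ
    have h1 : HasDerivAt (fun θ : ℝ => θ • (y - x)) ((1:ℝ) • (y - x)) θ := by
      exact (hasDerivAt_id θ).smul_const (y - x)
    rw [one_smul] at h1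
    exact h1.const_add x
  have hdiffat : ∀ θ : ℝ, θ ∈ Icc (0:ℝ) 1 → HasFDerivAt F (fderiv ℝ F (L θ)) (L θ) := by
    intro θ hθ
    exact ((hC1.differentiableOn one_ne_zero).differentiableAt
      (hU.mem_nhds (hseg θ hθ))).hasFDerivAt
  set γ : ℝ → Eu d := fun θ => F (L θ) - θ • (A (y - x)) with hγ
  set ψ : ℝ → Eu d := fun θ => fderiv ℝ F (L θ) (y - x) - A (y - x) with hψ
  have huIcc : uIcc (0:ℝ) 1 = Icc (0:ℝ) 1 := uIcc_of_le zero_le_one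
  have hγd : ∀ θ ∈ uIcc (0:ℝ) 1, HasDerivAt γ (ψ θ) θ := by
    intro θ hθ
    rw [huIcc] at hθ
    have h1 : HasDerivAt (fun θ => F (L θ)) (fderiv ℝ F (L θ) (y - x)) θ := by
      have := (hdiffat θ hθ).comp_hasDerivAt θ (hLd θ)
      exact this
    have h2 : HasDerivAt (fun θ : ℝ => θ • (A (y - x))) (A (y - x)) θ := by
      have := (hasDerivAt_id θ).smul_const (A (y - x))
      rwa [one_smul] at this
    exact h1.sub h2
  have hcont : ContinuousOn ψ (uIcc (0:ℝ) 1) := by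
    rw [huIcc]
    have hfc : ContinuousOn (fderiv ℝ F) U :=
      hC1.continuousOn_fderiv_of_isOpen hU le_rfl
    have hLc : Continuous L := by
      rw [hL]
      exact continuous_const.add (continuous_id.smul continuous_const)
    have h1 : ContinuousOn (fun θ : ℝ => fderiv ℝ F (L θ)) (Icc 0 1) :=
      hfc.comp hLc.continuousOn (fun θ hθ => hseg θ hθ)
    exact (h1.clm_apply continuousOn_const).sub continuousOn_const
  have hintg : IntervalIntegrable ψ MeasureTheory.volume 0 1 :=
    hcont.intervalIntegrable
  have hFTC : ∫ θ in (0:ℝ)..1, ψ θ = γ 1 - γ 0 :=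
    intervalIntegral.integral_eq_sub_of_hasDerivAt hγd hintg
  have hγ1 : γ 1 - γ 0 = F y - F x - A (y - x) := by
    have hL1 : L 1 = y := by rw [hL]; simp
    have hL0 : L 0 = x := by rw [hL]; simp
    rw [hγ]
    simp only [hL1, hL0, one_smul, zero_smul, sub_zero]
    abel
  have hbound : ∀ θ ∈ Set.uIoc (0:ℝ) 1, ‖ψ θ‖ ≤ (KDF * ‖y - x‖ ^ 2) * θ := by
    intro θ hθ
    rw [Set.mem_uIoc] at hθ
    have hθ' : 0 < θ ∧ θ ≤ 1 := by
      rcases hθ with h | h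
      · exact ⟨h.1, h.2⟩
      · linarith [h.1, h.2]
    have hθIcc : θ ∈ Icc (0:ℝ) 1 := ⟨hθ'.1.le, hθ'.2⟩
    have h1 : ψ θ = (fderiv ℝ F (L θ) - A) (y - x) := by
      rw [hψ]; simp
    rw [h1]
    have h2 : ‖(fderiv ℝ F (L θ) - A) (y - x)‖ ≤ ‖fderiv ℝ F (L θ) - A‖ * ‖y - x‖ :=
      (fderiv ℝ F (L θ) - A).le_opNorm (y - x)
    have h3 : ‖fderiv ℝ F (L θ) - A‖ ≤ KDF * (θ * ‖y - x‖) := by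
      have hd : dist (fderiv ℝ F (L θ)) (fderiv ℝ F x) ≤ KDF * dist (L θ) x :=
        hLDF.dist_le_mul (L θ) (hseg θ hθIcc) x hxU
      have hdL : dist (L θ) x = θ * ‖y - x‖ := by
        rw [hL, dist_eq_norm, add_sub_cancel_left, norm_smul, Real.norm_eq_abs,
          abs_of_nonneg hθ'.1.le]
      rw [dist_eq_norm] at hd
      rw [hA]
      calc ‖fderiv ℝ F (L θ) - fderiv ℝ F x‖ ≤ KDF * dist (L θ) x := hd
        _ = KDF * (θ * ‖y - x‖) := by rw [hdL]
    calc ‖(fderiv ℝ F (L θ) - A) (y - x)‖ ≤ ‖fderiv ℝ F (L θ) - A‖ * ‖y - x‖ := h2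
      _ ≤ (KDF * (θ * ‖y - x‖)) * ‖y - x‖ :=
          mul_le_mul_of_nonneg_right h3 (norm_nonneg _)
      _ = (KDF * ‖y - x‖ ^ 2) * θ := by ring
  have hgint : IntervalIntegrable (fun θ : ℝ => (KDF * ‖y - x‖ ^ 2) * θ)
      MeasureTheory.volume 0 1 := by
    apply Continuous.intervalIntegrable
    exact continuous_const.mul continuous_id
  have hnorm : ‖∫ θ in (0:ℝ)..1, ψ θ‖ ≤ |∫ θ in (0:ℝ)..1, (KDF * ‖y - x‖ ^ 2) * θ| := by
    apply intervalIntegral.norm_integral_le_abs_of_norm_le _ hgint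
    filter_upwards [MeasureTheory.ae_restrict_mem measurableSet_uIoc] with θ hθ
    exact hbound θ hθ
  have hval : ∫ θ in (0:ℝ)..1, (KDF * ‖y - x‖ ^ 2) * θ = (KDF * ‖y - x‖ ^ 2) * (1 / 2) := by
    rw [intervalIntegral.integral_const_mul, integral_id]
    norm_num
  rw [hFTC, hγ1] at hnorm
  rw [hval] at hnorm
  have habs : |(KDF : ℝ) * ‖y - x‖ ^ 2 * (1 / 2)| = KDF * ‖y - x‖ ^ 2 * (1 / 2) := by
    apply abs_of_nonneg
    positivity
  rw [habs] at hnorm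
  calc ‖F y - F x - A (y - x)‖ ≤ KDF * ‖y - x‖ ^ 2 * (1 / 2) := hnorm
    _ = KDF / 2 * ‖y - x‖ ^ 2 := by ring


end Reach14

open Reach14 in
theorem stmt14 {d : ℕ} (S : Set (EuclideanSpace ℝ (Fin d))) (hS : IsClosed S)
    (hne : S.Nonempty) (hreach : 0 < reach S)
    (s t : ℝ) (hs : 0 < s) (ht : 0 < t) (htr : ENNReal.ofReal t < reach S)
    (F G : EuclideanSpace ℝ (Fin d) → EuclideanSpace ℝ (Fin d))
    (KF KFi KDF : ℝ≥0)
    (hInj : Set.InjOn F {x | Metric.infDist x S < s})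
    (hC1 : ContDiffOn ℝ 1 F {x | Metric.infDist x S < s})
    (hLF : LipschitzOnWith KF F {x | Metric.infDist x S < s})
    (hLDF : LipschitzOnWith KDF (fderiv ℝ F) {x | Metric.infDist x S < s})
    (hG : ∀ x ∈ {x | Metric.infDist x S < s}, G (F x) = x)
    (hLG : LipschitzOnWith KFi G (F '' {x | Metric.infDist x S < s})) :
    ENNReal.ofReal (min (s / KFi) (1 / ((KF / t + KDF) * KFi ^ 2))) ≤
      reach (F '' S) := by
  classical
  have hUopen : IsOpen {x : Eu d | Metric.infDist x S < s} :=
    isOpen_lt (continuous_infDist_pt S) continuous_const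
  have hSU : S ⊆ {x : Eu d | Metric.infDist x S < s} := by
    intro x hx
    show infDist x S < s
    rw [infDist_zero_of_mem hx]
    exact hs
  set bound := min (s / (KFi:ℝ)) (1 / (((KF:ℝ) / t + (KDF:ℝ)) * (KFi:ℝ) ^ 2)) with hbound
  rcases le_or_gt bound 0 with hb0 | hb0
  · rw [ENNReal.ofReal_eq_zero.mpr hb0]
    exact zero_le
  have hKFi : 0 < (KFi:ℝ) := by
    rcases lt_or_eq_of_le KFi.coe_nonneg with h | h
    · exact h
    · exfalso
      have h1 : bound ≤ s / (KFi:ℝ) := min_le_left _ _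
      rw [← h, div_zero] at h1
      linarith
  have hCpos : 0 < (KF:ℝ) / t + (KDF:ℝ) := by
    rcases lt_or_ge 0 ((KF:ℝ) / t + (KDF:ℝ)) with h | h
    · exact h
    · exfalso
      have h2 : ((KF:ℝ) / t + (KDF:ℝ)) * (KFi:ℝ) ^ 2 ≤ 0 := by
        have h2a := mul_le_mul_of_nonneg_right h (sq_nonneg (KFi:ℝ))
        rwa [zero_mul] at h2a
      have h3 : 1 / (((KF:ℝ) / t + (KDF:ℝ)) * (KFi:ℝ) ^ 2) ≤ 0 := one_div_nonpos.mpr h2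
      have h4 : bound ≤ 1 / (((KF:ℝ) / t + (KDF:ℝ)) * (KFi:ℝ) ^ 2) := min_le_right _ _
      linarith
  rw [reach]
  refine le_iInf₂ (fun q0 hq0 => ?_)
  refine EMetric.le_infEdist.mpr ?_
  intro m hm
  rw [edist_dist]
  refine ENNReal.ofReal_le_ofReal ?_
  by_contra hq0m
  push_neg at hq0m
  obtain ⟨q1, hq1m, q2, hq2m, hq12⟩ := hm
  have hq1S : q1 ∈ F '' S := hq1m.1
  have hq2S : q2 ∈ F '' S := hq2m.1
  set r := infDist m (F '' S) with hr
  have hd1 : dist m q1 = r := hq1m.2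
  have hd2 : dist m q2 = r := hq2m.2
  have hrb : r < bound := by
    have h1 : r ≤ dist m q0 := infDist_le_dist_of_mem hq0
    rw [dist_comm] at h1
    linarith
  have hr0 : 0 < r := by
    rcases lt_or_ge 0 r with h | h
    · exact h
    · exfalso
      have h1 : r = 0 := le_antisymm h (by rw [hr]; exact infDist_nonneg)
      rw [h1] at hd1 hd2
      exact hq12 (by rw [← dist_eq_zero.mp hd1, ← dist_eq_zero.mp hd2])
  obtain ⟨p1, hp1S, hp1⟩ := hq1S
  obtain ⟨p2, hp2S, hp2⟩ := hq2S
  have hp1U : p1 ∈ {x : Eu d | Metric.infDist x S < s} := hSU hp1S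
  have hp2U : p2 ∈ {x : Eu d | Metric.infDist x S < s} := hSU hp2S
  have hq12' : ‖q2 - q1‖ ≤ 2 * r := by
    have h1 : dist q2 q1 ≤ dist q2 m + dist m q1 := dist_triangle _ _ _
    rw [dist_comm q2 m] at h1
    rw [← dist_eq_norm]
    linarith
  have hGlip : ‖p2 - p1‖ ≤ (KFi:ℝ) * ‖q2 - q1‖ := by
    have h1 : dist (G q2) (G q1) ≤ (KFi:ℝ) * dist q2 q1 :=
      hLG.dist_le_mul q2 ⟨p2, hp2U, hp2⟩ q1 ⟨p1, hp1U, hp1⟩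
    have h2 : G q2 = p2 := by rw [← hp2]; exact hG p2 hp2U
    have h3 : G q1 = p1 := by rw [← hp1]; exact hG p1 hp1U
    rw [h2, h3] at h1
    simpa [dist_eq_norm] using h1
  set v := r⁻¹ • (m - q1) with hv
  have hmq1 : ‖m - q1‖ = r := by rw [← dist_eq_norm]; exact hd1
  have hvnorm : ‖v‖ = 1 := by
    rw [hv, norm_smul, hmq1, Real.norm_eq_abs, abs_of_pos (inv_pos.mpr hr0)]
    field_simp
  have hkey1 : ⟪q2 - q1, v⟫ = ‖q2 - q1‖ ^ 2 / (2 * r) := by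
    have h1 : ‖(m - q1) - (q2 - q1)‖ = r := by
      have : (m - q1) - (q2 - q1) = m - q2 := by abel
      rw [this, ← dist_eq_norm]
      exact hd2
    have h2 : ‖(m - q1) - (q2 - q1)‖ ^ 2 =
        ‖m - q1‖ ^ 2 - 2 * ⟪m - q1, q2 - q1⟫ + ‖q2 - q1‖ ^ 2 := norm_sub_sq_real _ _
    rw [h1, hmq1] at h2
    have h3 : ⟪m - q1, q2 - q1⟫ = ‖q2 - q1‖ ^ 2 / 2 := by linarith
    rw [hv, real_inner_comm, real_inner_smul_left, h3, inv_mul_eq_div, div_div]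
  set A := fderiv ℝ F p1 with hA
  have hdiffp1 : DifferentiableAt ℝ F p1 :=
    (hC1.differentiableOn one_ne_zero).differentiableAt (hUopen.mem_nhds hp1U)
  have hAnorm : ‖A‖ ≤ (KF:ℝ) :=
    hdiffp1.hasFDerivAt.le_of_lipschitzOn (hUopen.mem_nhds hp1U) hLF
  set u := (ContinuousLinearMap.adjoint A) v with hu
  have hadj : ∀ z : Eu d, ⟪A z, v⟫ = ⟪z, u⟫ := by
    intro z
    calc ⟪A z, v⟫ = ⟪v, A z⟫ := real_inner_comm _ _
      _ = ⟪(ContinuousLinearMap.adjoint A) v, z⟫ :=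
          (ContinuousLinearMap.adjoint_inner_left A z v).symm
      _ = ⟪z, u⟫ := real_inner_comm _ _
  have hunorm : ‖u‖ ≤ (KF:ℝ) := by
    have h1 : ‖u‖ ≤ ‖ContinuousLinearMap.adjoint A‖ * ‖v‖ :=
      (ContinuousLinearMap.adjoint A).le_opNorm v
    rw [hvnorm, mul_one] at h1
    have h2 : ‖ContinuousLinearMap.adjoint A‖ = ‖A‖ :=
      (ContinuousLinearMap.adjoint (𝕜 := ℝ) (E := Eu d) (F := Eu d)).norm_map A
    linarith
  have H := H_of_reach (S := S) htr
  -- KEY inequality via extension lemma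
  have hKEY : ⟪p2 - p1, u⟫ ≤ (KF:ℝ) * ‖p2 - p1‖ ^ 2 / (2 * t) := by
    rcases eq_or_ne u 0 with hu0 | hu0
    · rw [hu0, inner_zero_right]
      positivity
    · have hun0 : 0 < ‖u‖ := norm_pos_iff.mpr hu0
      set w := ‖u‖⁻¹ • u with hwdef
      have hwnorm : ‖w‖ = 1 := by
        rw [hwdef, norm_smul, Real.norm_eq_abs, abs_of_pos (inv_pos.mpr hun0)]
        field_simp
      -- Step A : small tangent ball
      set Dden := r * (KDF:ℝ) + ((KF:ℝ) + (KDF:ℝ)) ^ 2 + 1 with hDden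
      have hDden0 : 0 < Dden := by positivity
      set ε := min (min 1 (s / 2)) (r * ‖u‖ / Dden) with hε
      have hε0 : 0 < ε := by
        refine lt_min (lt_min one_pos (by linarith)) ?_
        positivity
      have hε1 : ε ≤ 1 := le_trans (min_le_left _ _) (min_le_left _ _)
      have hεs : ε ≤ s / 2 := le_trans (min_le_left _ _) (min_le_right _ _)
      have hεD : ε * Dden ≤ r * ‖u‖ := by
        have h1 : ε ≤ r * ‖u‖ / Dden := min_le_right _ _
        rwa [le_div_iff₀ hDden0] at h1
      have hball : ∀ q ∈ S, ε ≤ dist (p1 + ε • w) q := by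
        intro q hqS
        by_contra hclose
        push_neg at hclose
        set h := q - p1 with hh
        have hstep1 : ‖h - ε • w‖ < ε := by
          have : p1 + ε • w - q = -(h - ε • w) := by rw [hh]; abel
          rw [dist_eq_norm, this, norm_neg] at hclose
          exact hclose
        have hh0 : h ≠ 0 := by
          intro h0
          rw [h0, zero_sub, norm_neg, norm_smul, hwnorm, mul_one, Real.norm_eq_abs,
            abs_of_pos hε0] at hstep1
          exact absurd hstep1 (lt_irrefl ε)
        have hfar : ‖h‖ < 2 * ε := by
          have h1 : ‖h‖ ≤ ‖h - ε • w‖ + ‖ε • w‖ := by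
            have : h = (h - ε • w) + ε • w := by abel
            nth_rewrite 1 [this]
            exact norm_add_le _ _
          rw [norm_smul, hwnorm, mul_one, Real.norm_eq_abs, abs_of_pos hε0] at h1
          linarith
        have hinner_h : ‖h‖ ^ 2 < 2 * ε * ⟪h, w⟫ := by
          have h1 : ‖h - ε • w‖ ^ 2 = ‖h‖ ^ 2 - 2 * ⟪h, ε • w⟫ + ‖ε • w‖ ^ 2 :=
            norm_sub_sq_real _ _
          have h2 : ⟪h, ε • w⟫ = ε * ⟪h, w⟫ := real_inner_smul_right _ _ _
          have h3 : ‖ε • w‖ = ε := by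
            rw [norm_smul, hwnorm, mul_one, Real.norm_eq_abs, abs_of_pos hε0]
          have h4 : ‖h - ε • w‖ ^ 2 < ε ^ 2 :=
            pow_lt_pow_left₀ hstep1 (norm_nonneg _) (by norm_num)
          rw [h2, h3] at h1
          linarith
        have hseg : ∀ θ : ℝ, θ ∈ Icc (0:ℝ) 1 →
            p1 + θ • (q - p1) ∈ {x : Eu d | Metric.infDist x S < s} := by
          intro θ hθ
          show infDist (p1 + θ • (q - p1)) S < s
          have h1 : infDist (p1 + θ • (q - p1)) S ≤ dist (p1 + θ • (q - p1)) p1 :=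
            infDist_le_dist_of_mem hp1S
          have h2 : dist (p1 + θ • (q - p1)) p1 = θ * ‖q - p1‖ := by
            rw [dist_eq_norm, add_sub_cancel_left, norm_smul, Real.norm_eq_abs,
              abs_of_nonneg hθ.1]
          have h3 : θ * ‖q - p1‖ ≤ ‖q - p1‖ :=
            mul_le_of_le_one_left (norm_nonneg _) hθ.2
          have h4 : ‖q - p1‖ < 2 * ε := hfar
          linarith [hεs, hε1]
        have htay : ‖F q - F p1 - A h‖ ≤ (KDF:ℝ) / 2 * ‖h‖ ^ 2 := by
          rw [hh]
          exact taylor hUopen hC1 hLDF hseg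
        set e := F q - F p1 - A h with he
        have hFq : r ≤ dist m (F q) := infDist_le_dist_of_mem (mem_image_of_mem F hqS)
        have hmrv : m = q1 + r • v := by
          rw [hv, smul_smul, mul_inv_cancel₀ hr0.ne', one_smul]
          abel
        have hexp : F q - m = A h + e - r • v := by
          rw [hmrv, he, ← hp1]
          abel
        have hsq : r ^ 2 ≤ ‖A h + e - r • v‖ ^ 2 := by
          rw [← hexp]
          have h1 : r ≤ ‖F q - m‖ := by
            rw [← norm_neg, neg_sub, ← dist_eq_norm]
            exact hFq
          exact pow_le_pow_left₀ hr0.le h1 2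
        have hexpand : ‖A h + e - r • v‖ ^ 2 =
            ‖A h + e‖ ^ 2 - 2 * r * ⟪A h + e, v⟫ + r ^ 2 := by
          have h1 : ‖A h + e - r • v‖ ^ 2 =
              ‖A h + e‖ ^ 2 - 2 * ⟪A h + e, r • v⟫ + ‖r • v‖ ^ 2 := norm_sub_sq_real _ _
          have h2 : ⟪A h + e, r • v⟫ = r * ⟪A h + e, v⟫ := real_inner_smul_right _ _ _
          have h3 : ‖r • v‖ = r := by
            rw [norm_smul, hvnorm, mul_one, Real.norm_eq_abs, abs_of_pos hr0]
          rw [h2, h3] at h1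
          linarith [h1]
        have hub : 2 * r * ⟪A h + e, v⟫ ≤ ‖A h + e‖ ^ 2 := by linarith
        have hAhv : ⟪A h, v⟫ = ‖u‖ * ⟪h, w⟫ := by
          rw [hadj h]
          have : u = ‖u‖ • w := by
            rw [hwdef, smul_smul, mul_inv_cancel₀ hun0.ne', one_smul]
          nth_rewrite 1 [this]
          rw [real_inner_smul_right]
        have hev : -((KDF:ℝ) / 2 * ‖h‖ ^ 2) ≤ ⟪e, v⟫ := by
          have h1 : |⟪e, v⟫| ≤ ‖e‖ * ‖v‖ := abs_real_inner_le_norm _ _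
          rw [hvnorm, mul_one] at h1
          have h2 := (abs_le.mp h1).1
          have h3 : ‖e‖ ≤ (KDF:ℝ) / 2 * ‖h‖ ^ 2 := htay
          linarith
        have hAe : ‖A h + e‖ ≤ ((KF:ℝ) + (KDF:ℝ)) * ‖h‖ := by
          have h1 : ‖A h + e‖ ≤ ‖A h‖ + ‖e‖ := norm_add_le _ _
          have h2 : ‖A h‖ ≤ (KF:ℝ) * ‖h‖ :=
            le_trans (A.le_opNorm h) (mul_le_mul_of_nonneg_right hAnorm (norm_nonneg _))
          have h3 : ‖e‖ ≤ (KDF:ℝ) * ‖h‖ := by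
            have h3a : ‖h‖ ≤ 2 := by linarith [hfar, hε1]
            have h3b : ‖h‖ * ‖h‖ ≤ 2 * ‖h‖ :=
              mul_le_mul_of_nonneg_right h3a (norm_nonneg h)
            have h3c : (KDF:ℝ) / 2 * (‖h‖ * ‖h‖) ≤ (KDF:ℝ) / 2 * (2 * ‖h‖) :=
              mul_le_mul_of_nonneg_left h3b (by positivity)
            have h3d : (KDF:ℝ) / 2 * ‖h‖ ^ 2 = (KDF:ℝ) / 2 * (‖h‖ * ‖h‖) := by ring
            have h3e : (KDF:ℝ) / 2 * (2 * ‖h‖) = (KDF:ℝ) * ‖h‖ := by ring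
            linarith [htay]
          linarith
        have hAe2 : ‖A h + e‖ ^ 2 ≤ ((KF:ℝ) + (KDF:ℝ)) ^ 2 * ‖h‖ ^ 2 := by
          calc ‖A h + e‖ ^ 2 ≤ (((KF:ℝ) + (KDF:ℝ)) * ‖h‖) ^ 2 :=
                pow_le_pow_left₀ (norm_nonneg _) hAe 2
            _ = ((KF:ℝ) + (KDF:ℝ)) ^ 2 * ‖h‖ ^ 2 := by ring
        have hn2 : 0 < ‖h‖ ^ 2 := pow_pos (norm_pos_iff.mpr hh0) 2
        -- combine everything
        have hc1 : 2 * r * ⟪A h + e, v⟫ = 2 * r * (‖u‖ * ⟪h, w⟫) + 2 * r * ⟪e, v⟫ := by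
          rw [inner_add_left, hAhv]
          ring
        have hc2 : r * ‖u‖ * ‖h‖ ^ 2 < r * ‖u‖ * (2 * ε * ⟪h, w⟫) := by
          have := mul_lt_mul_of_pos_left hinner_h (by positivity : 0 < r * ‖u‖)
          linarith
        have hc3 : Dden * ‖h‖ ^ 2 ≤ (r * ‖u‖ / ε) * ‖h‖ ^ 2 := by
          have h1 : Dden ≤ r * ‖u‖ / ε := by
            rw [le_div_iff₀ hε0]
            linarith [hεD]
          exact mul_le_mul_of_nonneg_right h1 hn2.le
        -- 2 r ‖u‖ ⟪h,w⟫ > (r‖u‖/ε) ‖h‖²  ≥ Dden ‖h‖²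
        have hc4 : (r * ‖u‖ / ε) * ‖h‖ ^ 2 < 2 * r * (‖u‖ * ⟪h, w⟫) := by
          rw [div_mul_eq_mul_div, div_lt_iff₀ hε0]
          have hr2 : 2 * r * (‖u‖ * ⟪h, w⟫) * ε = r * ‖u‖ * (2 * ε * ⟪h, w⟫) := by ring
          linarith [hc2, hr2]
        have hc5 : 2 * r * ⟪e, v⟫ ≥ -(r * (KDF:ℝ) * ‖h‖ ^ 2) := by
          have := mul_le_mul_of_nonneg_left hev (by linarith : (0:ℝ) ≤ 2 * r)
          have hr3 : 2 * r * -((KDF:ℝ) / 2 * ‖h‖ ^ 2) = -(r * (KDF:ℝ) * ‖h‖ ^ 2) := by ring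
          linarith
        have hd : Dden * ‖h‖ ^ 2 =
            r * (KDF:ℝ) * ‖h‖ ^ 2 + ((KF:ℝ) + (KDF:ℝ)) ^ 2 * ‖h‖ ^ 2 + ‖h‖ ^ 2 := by
          rw [hDden]; ring
        linarith [hub, hc1, hc3, hc4, hc5, hAe2, hd, hn2]
      -- now apply extension
      have hext := extension hS hne H hp1S hwnorm hε0 hball
      have hineq : ∀ lam : ℝ, 0 < lam → lam < t →
          2 * lam * ⟪w, p2 - p1⟫ ≤ ‖p2 - p1‖ ^ 2 := by
        intro lam h0 hlt
        have h1 : lam ≤ dist (p1 + lam • w) p2 := hext lam h0.le hlt p2 hp2S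
        have h2 : lam ^ 2 ≤ ‖p1 + lam • w - p2‖ ^ 2 := by
          rw [dist_eq_norm] at h1
          exact pow_le_pow_left₀ h0.le h1 2
        have h3 : ‖p1 + lam • w - p2‖ ^ 2 =
            lam ^ 2 - 2 * lam * ⟪w, p2 - p1⟫ + ‖p2 - p1‖ ^ 2 := by
          have hrw : p1 + lam • w - p2 = lam • w - (p2 - p1) := by abel
          rw [hrw, norm_sub_sq_real, norm_smul, hwnorm, mul_one, Real.norm_eq_abs,
            abs_of_pos h0, real_inner_smul_left]
          ring
        linarith
      have hlim : 2 * t * ⟪w, p2 - p1⟫ ≤ ‖p2 - p1‖ ^ 2 := by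
        by_contra hcon
        push_neg at hcon
        set I := ⟪w, p2 - p1⟫ with hI
        have hI0 : 0 < I := by
          by_contra hI'
          push_neg at hI'
          have h5 : 2 * t * I ≤ 2 * t * 0 := mul_le_mul_of_nonneg_left hI' (by linarith)
          rw [mul_zero] at h5
          have h6 : 0 ≤ ‖p2 - p1‖ ^ 2 := sq_nonneg _
          linarith
        set lam := (‖p2 - p1‖ ^ 2 / (2 * I) + t) / 2 with hlam
        have hl1 : ‖p2 - p1‖ ^ 2 / (2 * I) < t := by
          rw [div_lt_iff₀ (by positivity)]
          have h7 : t * (2 * I) = 2 * t * I := by ring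
          linarith
        have hl2 : 0 < lam := by
          rw [hlam]
          have : 0 ≤ ‖p2 - p1‖ ^ 2 / (2 * I) := by positivity
          linarith
        have hl3 : lam < t := by rw [hlam]; linarith
        have hl4 : ‖p2 - p1‖ ^ 2 / (2 * I) < lam := by rw [hlam]; linarith
        have := hineq lam hl2 hl3
        rw [div_lt_iff₀ (by positivity : (0:ℝ) < 2 * I)] at hl4
        have h8 : lam * (2 * I) = 2 * lam * I := by ring
        linarith
      have hwu : ⟪p2 - p1, u⟫ = ‖u‖ * ⟪w, p2 - p1⟫ := by
        have h1 : u = ‖u‖ • w := by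
          rw [hwdef, smul_smul, mul_inv_cancel₀ hun0.ne', one_smul]
        nth_rewrite 1 [h1]
        rw [real_inner_smul_right, real_inner_comm]
      rw [hwu]
      have h2 : ⟪w, p2 - p1⟫ ≤ ‖p2 - p1‖ ^ 2 / (2 * t) := by
        rw [le_div_iff₀ (by positivity : (0:ℝ) < 2 * t)]
        linarith
      calc ‖u‖ * ⟪w, p2 - p1⟫ ≤ ‖u‖ * (‖p2 - p1‖ ^ 2 / (2 * t)) :=
            mul_le_mul_of_nonneg_left h2 (norm_nonneg _)
        _ ≤ (KF:ℝ) * (‖p2 - p1‖ ^ 2 / (2 * t)) :=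
            mul_le_mul_of_nonneg_right hunorm (by positivity)
        _ = (KF:ℝ) * ‖p2 - p1‖ ^ 2 / (2 * t) := by ring
  -- Taylor estimate for p2
  have hseg2 : ∀ θ : ℝ, θ ∈ Icc (0:ℝ) 1 →
      p1 + θ • (p2 - p1) ∈ {x : Eu d | Metric.infDist x S < s} := by
    intro θ hθ
    show infDist (p1 + θ • (p2 - p1)) S < s
    have hb2 : bound ≤ s / (KFi:ℝ) := min_le_left _ _
    have hrs : (KFi:ℝ) * r < s := by
      have : r < s / (KFi:ℝ) := lt_of_lt_of_le hrb hb2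
      rw [lt_div_iff₀ hKFi] at this
      linarith [this]
    have hnp : ‖p2 - p1‖ ≤ (KFi:ℝ) * (2 * r) := by
      calc ‖p2 - p1‖ ≤ (KFi:ℝ) * ‖q2 - q1‖ := hGlip
        _ ≤ (KFi:ℝ) * (2 * r) := mul_le_mul_of_nonneg_left hq12' KFi.coe_nonneg
    rcases le_or_gt θ (1/2) with hhalf | hhalf
    · have h1 : infDist (p1 + θ • (p2 - p1)) S ≤ dist (p1 + θ • (p2 - p1)) p1 :=
        infDist_le_dist_of_mem hp1S
      have h2 : dist (p1 + θ • (p2 - p1)) p1 = θ * ‖p2 - p1‖ := by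
        rw [dist_eq_norm, add_sub_cancel_left, norm_smul, Real.norm_eq_abs,
          abs_of_nonneg hθ.1]
      have h3 : θ * ‖p2 - p1‖ ≤ (1/2) * ((KFi:ℝ) * (2 * r)) := by
        apply mul_le_mul hhalf hnp (norm_nonneg _) (by norm_num)
      have h4 : (1/2) * ((KFi:ℝ) * (2 * r)) = (KFi:ℝ) * r := by ring
      linarith
    · have h1 : infDist (p1 + θ • (p2 - p1)) S ≤ dist (p1 + θ • (p2 - p1)) p2 :=
        infDist_le_dist_of_mem hp2S
      have h2 : dist (p1 + θ • (p2 - p1)) p2 = (1 - θ) * ‖p2 - p1‖ := by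
        have hrw : p1 + θ • (p2 - p1) - p2 = -((1 - θ) • (p2 - p1)) := by
          rw [sub_smul, one_smul]
          abel
        rw [dist_eq_norm, hrw, norm_neg, norm_smul, Real.norm_eq_abs,
          abs_of_nonneg (by linarith [hθ.2] : (0:ℝ) ≤ 1 - θ)]
      have h3 : (1 - θ) * ‖p2 - p1‖ ≤ (1/2) * ((KFi:ℝ) * (2 * r)) := by
        apply mul_le_mul (by linarith) hnp (norm_nonneg _) (by norm_num)
      have h4 : (1/2) * ((KFi:ℝ) * (2 * r)) = (KFi:ℝ) * r := by ring
      linarith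
  have htay2 : ‖F p2 - F p1 - A (p2 - p1)‖ ≤ (KDF:ℝ) / 2 * ‖p2 - p1‖ ^ 2 :=
    taylor hUopen hC1 hLDF hseg2
  -- final chain
  have hchain : ‖q2 - q1‖ ^ 2 / (2 * r) ≤
      (((KF:ℝ) / t + (KDF:ℝ)) / 2) * ((KFi:ℝ) ^ 2 * ‖q2 - q1‖ ^ 2) := by
    have t1 : ⟪q2 - q1, v⟫ = ⟪A (p2 - p1), v⟫ + ⟪q2 - q1 - A (p2 - p1), v⟫ := by
      rw [← inner_add_left]
      congr 1
      abel
    have t2 : ⟪A (p2 - p1), v⟫ = ⟪p2 - p1, u⟫ := hadj _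
    have t3 : ⟪q2 - q1 - A (p2 - p1), v⟫ ≤ (KDF:ℝ) / 2 * ‖p2 - p1‖ ^ 2 := by
      have h1 : q2 - q1 - A (p2 - p1) = F p2 - F p1 - A (p2 - p1) := by
        rw [← hp1, ← hp2]
      have h2 : ⟪q2 - q1 - A (p2 - p1), v⟫ ≤ ‖q2 - q1 - A (p2 - p1)‖ * ‖v‖ :=
        real_inner_le_norm _ _
      rw [hvnorm, mul_one, h1] at h2
      rw [h1]
      linarith [htay2]
    have t5 : ⟪q2 - q1, v⟫ ≤ (((KF:ℝ) / t + (KDF:ℝ)) / 2) * ‖p2 - p1‖ ^ 2 := by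
      rw [t1, t2]
      have e : (((KF:ℝ) / t + (KDF:ℝ)) / 2) * ‖p2 - p1‖ ^ 2 =
          (KF:ℝ) * ‖p2 - p1‖ ^ 2 / (2 * t) + (KDF:ℝ) / 2 * ‖p2 - p1‖ ^ 2 := by
        field_simp [ht.ne']
      calc ⟪p2 - p1, u⟫ + ⟪q2 - q1 - A (p2 - p1), v⟫ ≤
            (KF:ℝ) * ‖p2 - p1‖ ^ 2 / (2 * t) + (KDF:ℝ) / 2 * ‖p2 - p1‖ ^ 2 :=
            add_le_add hKEY t3
        _ = (((KF:ℝ) / t + (KDF:ℝ)) / 2) * ‖p2 - p1‖ ^ 2 := e.symm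
    have t6 : ‖p2 - p1‖ ^ 2 ≤ (KFi:ℝ) ^ 2 * ‖q2 - q1‖ ^ 2 := by
      calc ‖p2 - p1‖ ^ 2 ≤ ((KFi:ℝ) * ‖q2 - q1‖) ^ 2 :=
            pow_le_pow_left₀ (norm_nonneg _) hGlip 2
        _ = (KFi:ℝ) ^ 2 * ‖q2 - q1‖ ^ 2 := by ring
    rw [← hkey1]
    have h7 : 0 ≤ ((KF:ℝ) / t + (KDF:ℝ)) / 2 := by linarith
    have h8 := mul_le_mul_of_nonneg_left t6 h7
    have h9 : (((KF:ℝ) / t + (KDF:ℝ)) / 2) * ((KFi:ℝ) ^ 2 * ‖q2 - q1‖ ^ 2) =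
        (((KF:ℝ) / t + (KDF:ℝ)) / 2) * (KFi:ℝ) ^ 2 * ‖q2 - q1‖ ^ 2 := by ring
    linarith [t5, h8]
  have hq12n : q2 - q1 ≠ 0 := sub_ne_zero.mpr (by
    intro h
    exact hq12 h.symm)
  have hN : 0 < ‖q2 - q1‖ ^ 2 := pow_pos (norm_pos_iff.mpr hq12n) 2
  have hfin : 1 ≤ (((KF:ℝ) / t + (KDF:ℝ)) * (KFi:ℝ) ^ 2) * r := by
    have h1 : ‖q2 - q1‖ ^ 2 ≤
        (((KF:ℝ) / t + (KDF:ℝ)) * (KFi:ℝ) ^ 2) * r * ‖q2 - q1‖ ^ 2 := by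
      have := mul_le_mul_of_nonneg_left hchain (by positivity : (0:ℝ) ≤ 2 * r)
      have h2 : 2 * r * (‖q2 - q1‖ ^ 2 / (2 * r)) = ‖q2 - q1‖ ^ 2 := by
        field_simp
      linarith [this, h2]
    have h3 : 1 * ‖q2 - q1‖ ^ 2 ≤
        (((KF:ℝ) / t + (KDF:ℝ)) * (KFi:ℝ) ^ 2) * r * ‖q2 - q1‖ ^ 2 := by linarith
    exact le_of_mul_le_mul_right h3 hN
  have hlast : 1 / (((KF:ℝ) / t + (KDF:ℝ)) * (KFi:ℝ) ^ 2) ≤ r := by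
    rw [div_le_iff₀ (by positivity : (0:ℝ) < ((KF:ℝ) / t + (KDF:ℝ)) * (KFi:ℝ) ^ 2)]
    linarith [hfin]
  have : bound ≤ r := le_trans (min_le_right _ _) hlast
  linarith
end

section
/- Let S ⊆ ℝ^d be a closed set contained in a closed ball B with ∂B ⊆ S. If x ∈ ax(S) and π_S(x) ∩ ∂B = ∅, then x ∈ ax(S \ ∂B). Conversely, if x ∈ ax(S \ ∂B) and some (hence every) q ∈ π_{S\∂B}(x) satisfies dist(x,q) < dist(x, ∂B), then x ∈ ax(S). -/
open Metric Set

theorem stmt15 {d : ℕ} (S : Set (EuclideanSpace ℝ (Fin d))) (hS : IsClosed S)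
    (c : EuclideanSpace ℝ (Fin d)) (r : ℝ) (hr : 0 < r)
    (hSB : S ⊆ Metric.closedBall c r) (hBS : Metric.sphere c r ⊆ S)
    (x : EuclideanSpace ℝ (Fin d)) :
    (x ∈ medialAxis S → proj S x ∩ Metric.sphere c r = ∅ →
      x ∈ medialAxis (S \ Metric.sphere c r)) ∧
    (x ∈ medialAxis (S \ Metric.sphere c r) →
      (∃ q ∈ proj (S \ Metric.sphere c r) x,
        dist x q < Metric.infDist x (Metric.sphere c r)) →
      x ∈ medialAxis S) := by
  constructor
  · intro hx hdisj
    obtain ⟨p, hp, q, hq, hpq⟩ := hx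
    -- every projection point avoids the sphere, hence lies in S'
    have hmem : ∀ y ∈ proj S x, y ∈ S \ Metric.sphere c r := by
      intro y hy
      refine ⟨hy.1, fun hsph => ?_⟩
      have : y ∈ proj S x ∩ Metric.sphere c r := ⟨hy, hsph⟩
      rw [hdisj] at this
      exact this
    have hp' := hmem p hp
    have heq : Metric.infDist x (S \ Metric.sphere c r) = Metric.infDist x S := by
      apply le_antisymm
      · calc Metric.infDist x (S \ Metric.sphere c r) ≤ dist x p :=
              Metric.infDist_le_dist_of_mem hp'
          _ = Metric.infDist x S := hp.2
      · exact Metric.infDist_le_infDist_of_subset diff_subset ⟨p, hp'⟩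
    refine ⟨p, ⟨hp', hp.2.trans heq.symm⟩, q, ⟨hmem q hq, hq.2.trans heq.symm⟩, hpq⟩
  · intro hx ⟨q, hq, hlt⟩
    obtain ⟨p, hp, p', hp', hpp'⟩ := hx
    have heq : Metric.infDist x S = Metric.infDist x (S \ Metric.sphere c r) := by
      apply le_antisymm
      · exact Metric.infDist_le_infDist_of_subset diff_subset ⟨q, hq.1⟩
      · haveI : Nonempty S := ⟨⟨q, hq.1.1⟩⟩
        conv_rhs => rw [Metric.infDist_eq_iInf]
        apply le_ciInf
        rintro ⟨y, hy⟩
        by_cases hsph : y ∈ Metric.sphere c r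
        · calc Metric.infDist x (S \ Metric.sphere c r) = dist x q := hq.2.symm
            _ ≤ Metric.infDist x (Metric.sphere c r) := hlt.le
            _ ≤ dist x y := Metric.infDist_le_dist_of_mem hsph
        · exact Metric.infDist_le_dist_of_mem ⟨hy, hsph⟩
    exact ⟨p, ⟨hp.1.1, hp.2.trans heq.symm⟩, p', ⟨hp'.1.1, hp'.2.trans heq.symm⟩, hpp'⟩
end
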